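/- arXiv:1703.03973 — 12 statements merged into one kernel-verified Lean document; each statement's English description precedes it below -/
import Mathlib

section
/- For every integer n ≥ 2, the shift graph S_n has path-chromatic number at most 2. -/
open SimpleGraph

/-- A tree-decomposition of `G` with host graph `T`. -/
structure TreeDecomp {V : Type*} (G : SimpleGraph V) {ι : Type*} (T : SimpleGraph ι) where
  bag : ι → Set V
  covers_vertex : ∀ v, ∃ t, v ∈ bag t
  covers_edge : ∀ ⦃u v⦄, G.Adj u v → ∃ t, u ∈ bag t ∧ v ∈ bag t
  bags_connected : ∀ v, (T.induce {t | v ∈ bag t}).Connected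

/-- The chromatic number of a decomposition: sup over bags of the chromatic
number of the induced subgraph on the bag. -/
noncomputable def TreeDecomp.chi {V ι : Type*} {G : SimpleGraph V} {T : SimpleGraph ι}
    (D : TreeDecomp G T) : ℕ∞ :=
  ⨆ t, (G.induce (D.bag t)).chromaticNumber

/-- The tree-chromatic number of `G`. -/
noncomputable def treeChi {V : Type*} (G : SimpleGraph V) : ℕ∞ :=
  sInf {k | ∃ (ι : Type) (T : SimpleGraph ι), T.IsTree ∧ ∃ D : TreeDecomp G T, D.chi = k}

/-- The one-way infinite path on ℕ. -/
def pathGraphN : SimpleGraph ℕ := SimpleGraph.fromRel (fun i j => j = i + 1)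

/-- The path-chromatic number of `G`. -/
noncomputable def pathChi {V : Type*} (G : SimpleGraph V) : ℕ∞ :=
  sInf {k | ∃ D : TreeDecomp G pathGraphN, D.chi = k}

/-- Vertices of the shift graph `S n`: pairs `[a,b]` with `1 ≤ a < b ≤ n`. -/
def ShiftVert (n : ℕ) := {p : ℕ × ℕ // 1 ≤ p.1 ∧ p.1 < p.2 ∧ p.2 ≤ n}

/-- The shift graph: `[a,b]` adjacent to `[c,d]` iff `b = c` or `d = a`. -/
def ShiftGraph (n : ℕ) : SimpleGraph (ShiftVert n) :=
  SimpleGraph.fromRel (fun u v => u.1.2 = v.1.1)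

lemma interval_connected (a b : ℕ) (hab : a ≤ b) :
    (pathGraphN.induce {t | a ≤ t ∧ t ≤ b}).Connected := by
  rw [SimpleGraph.connected_iff]
  have base : ({t | a ≤ t ∧ t ≤ b} : Set ℕ) := ⟨a, le_refl a, hab⟩
  have reach : ∀ t (h1 : a ≤ t) (h2 : t ≤ b),
      (pathGraphN.induce {t | a ≤ t ∧ t ≤ b}).Reachable ⟨a, le_refl a, hab⟩ ⟨t, h1, h2⟩ := by
    intro t h1
    induction t, h1 using Nat.le_induction with
    | base => intro _; exact SimpleGraph.Reachable.refl _
    | succ m hm ih =>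
      intro h2
      have hmb : m ≤ b := le_trans (Nat.le_succ m) h2
      refine (ih hmb).trans ?_
      apply SimpleGraph.Adj.reachable
      show pathGraphN.Adj m (m+1)
      exact ⟨Nat.ne_of_lt (Nat.lt_succ_self m), Or.inl rfl⟩
  constructor
  · rintro ⟨u, hu1, hu2⟩ ⟨v, hv1, hv2⟩
    exact (reach u hu1 hu2).symm.trans (reach v hv1 hv2)
  · exact ⟨⟨a, le_refl a, hab⟩⟩

noncomputable def shiftDecomp (n : ℕ) : TreeDecomp (ShiftGraph n) pathGraphN where
  bag t := {p | p.1.1 ≤ t ∧ t ≤ p.1.2}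
  covers_vertex v := ⟨v.1.1, le_refl _, le_of_lt v.2.2.1⟩
  covers_edge := by
    rintro u v ⟨hne, h | h⟩
    · exact ⟨u.1.2, ⟨le_of_lt u.2.2.1, le_refl _⟩, ⟨le_of_eq h.symm, h ▸ le_of_lt v.2.2.1⟩⟩
    · exact ⟨v.1.2, ⟨le_of_eq h.symm, h ▸ le_of_lt u.2.2.1⟩, ⟨le_of_lt v.2.2.1, le_refl _⟩⟩
  bags_connected v := interval_connected v.1.1 v.1.2 (le_of_lt v.2.2.1)

lemma bag_colorable (n t : ℕ) :
    ((ShiftGraph n).induce {p : ShiftVert n | p.1.1 ≤ t ∧ t ≤ p.1.2}).Colorable 2 := by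
  refine ⟨⟨fun p => if p.1.1.2 = t then 0 else 1, ?_⟩⟩
  rintro ⟨⟨⟨a,b⟩,ha1,hab,hbn⟩,hua,hub⟩ ⟨⟨⟨c,d⟩,hc1,hcd,hdn⟩,hvc,hvd⟩ ⟨hne,h|h⟩ heq
  · simp only [Function.Embedding.coe_subtype] at h hua hub hvc hvd
    have hb : b = t := by omega
    have hd : d ≠ t := by omega
    simp only [hb, hd, if_pos rfl, if_neg] at heq
    exact absurd heq (by simp)
  · simp only [Function.Embedding.coe_subtype] at h hua hub hvc hvd
    have hd : d = t := by omega
    have hb : b ≠ t := by omega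
    simp only [hd, hb, if_pos rfl, if_neg] at heq
    exact absurd heq (by simp)

/-- For every `n ≥ 2` the shift graph `S n` has path-chromatic number at most 2. -/
theorem stmt1 (n : ℕ) (hn : 2 ≤ n) : pathChi (ShiftGraph n) ≤ 2 := by
  refine le_trans (sInf_le ⟨shiftDecomp n, rfl⟩) ?_
  refine iSup_le fun t => ?_
  have := (bag_colorable n t).chromaticNumber_le
  exact_mod_cast this
end

section
/- For every n ≥ 1, the graph G_n of V's in the complete binary tree T_n has clique number at most 2, i.e., G_n is triangle-free. -/
/-- `y` lies in the left tree above `x`: the first bit of `y` after the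
initial segment `x` is `0`. -/
def leftAbove (x y : List Bool) : Prop := ∃ t, y = x ++ false :: t

/-- `y` lies in the right tree above `x`: the first bit of `y` after the
initial segment `x` is `1`. -/
def rightAbove (x y : List Bool) : Prop := ∃ t, y = x ++ true :: t

/-- A "V" in the complete binary tree `T n` (binary strings of length at most `n`):
a low point `x` with `y` in the left tree above `x` and `z` in the right tree above `x`. -/
structure Vee (n : ℕ) where
  x : List Bool
  y : List Bool
  z : List Bool
  hx : x.length ≤ n
  hy : y.length ≤ n
  hz : z.length ≤ n
  hxy : leftAbove x y
  hxz : rightAbove x z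

lemma core {n : ℕ} (a b c : Vee n)
    (hab : (a.z = b.x ∨ a.y = b.x) ∨ (b.z = a.x ∨ b.y = a.x))
    (hbc : (b.z = c.x ∨ b.y = c.x) ∨ (c.z = b.x ∨ c.y = b.x))
    (hac : (a.z = c.x ∨ a.y = c.x) ∨ (c.z = a.x ∨ c.y = a.x)) : False := by
  obtain ⟨ta, hay⟩ := a.hxy
  obtain ⟨ta', haz⟩ := a.hxz
  obtain ⟨tb, hby⟩ := b.hxy
  obtain ⟨tb', hbz⟩ := b.hxz
  obtain ⟨tc, hcy⟩ := c.hxy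
  obtain ⟨tc', hcz⟩ := c.hxz
  rcases hab with (h1 | h1) | (h1 | h1) <;>
  rcases hbc with (h2 | h2) | (h2 | h2) <;>
  rcases hac with (h3 | h3) | (h3 | h3) <;>
    simp_all [List.append_assoc]

/-- The graph `G n` of V's: two V's are adjacent iff an endpoint (`y` or `z`)
of one is the low point `x` of the other. -/
def GraphV (n : ℕ) : SimpleGraph (Vee n) :=
  SimpleGraph.fromRel (fun V₁ V₂ => V₁.z = V₂.x ∨ V₁.y = V₂.x)

/-- For every `n ≥ 1` the graph of V's is triangle-free (clique number at most 2). -/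
theorem stmt4 (n : ℕ) (hn : 1 ≤ n) : (GraphV n).CliqueFree 3 := by
  classical
  intro s hs
  obtain ⟨a, b, c, hab', hac', hbc', hseq⟩ := Finset.card_eq_three.mp hs.card_eq
  have hab := hs.isClique (by rw [hseq]; simp) (by rw [hseq]; simp) hab'
  have hbc := hs.isClique (by rw [hseq]; simp) (by rw [hseq]; simp) hbc'
  have hac := hs.isClique (by rw [hseq]; simp) (by rw [hseq]; simp) hac'
  rw [GraphV, SimpleGraph.fromRel_adj] at hab hbc hac
  exact core a b c hab.2 hbc.2 hac.2
end

section
/- For every n ≥ 1, the graph G_n of V's in the complete binary tree T_n has path-chromatic number at most 2. -/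
open SimpleGraph

def toNum (l : List Bool) : ℕ := l.foldl (fun a b => 2*a + cond b 1 0) 0

lemma foldl_eq (l : List Bool) : ∀ a : ℕ,
    l.foldl (fun a b => 2*a + cond b 1 0) a = a * 2 ^ l.length + toNum l := by
  induction l with
  | nil => intro a; simp [toNum]
  | cons b t ih =>
      intro a
      simp only [List.foldl_cons, List.length_cons]
      rw [ih (2*a + cond b 1 0)]
      have : toNum (b :: t) = (cond b 1 0) * 2 ^ t.length + toNum t := by
        show List.foldl _ (2*0 + cond b 1 0) t = _
        rw [ih (2*0 + cond b 1 0)]; ring_nf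
      rw [this, pow_succ]; ring

lemma toNum_cons (b : Bool) (t : List Bool) :
    toNum (b :: t) = (cond b 1 0) * 2 ^ t.length + toNum t := by
  show List.foldl _ (2*0 + cond b 1 0) t = _
  rw [foldl_eq t (2*0 + cond b 1 0)]; ring_nf

lemma toNum_append (x s : List Bool) :
    toNum (x ++ s) = toNum x * 2 ^ s.length + toNum s := by
  show List.foldl _ 0 (x ++ s) = _
  rw [List.foldl_append, foldl_eq s (List.foldl _ 0 x)]; rfl

lemma toNum_lt (l : List Bool) : toNum l < 2 ^ l.length := by
  induction l with
  | nil => simp [toNum]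
  | cons b t ih =>
      rw [toNum_cons, List.length_cons, pow_succ]
      have : (cond b 1 0 : ℕ) ≤ 1 := by cases b <;> simp
      nlinarith

def key (n : ℕ) (v : List Bool) : ℕ := toNum v * 2 ^ (n + 1 - v.length) + 2 ^ (n - v.length)

lemma key_arith_left (a b k r : ℕ) (hb : b < 2 ^ k) :
    (a * 2 ^ (k+1) + b) * 2 ^ (r+1) + 2 ^ r < a * 2 ^ (k+r+2) + 2 ^ (k+r+1) := by
  have h1 : a * 2 ^ (k+1) * 2 ^ (r+1) = a * 2 ^ (k+r+2) := by
    rw [mul_assoc, ← pow_add]; ring_nf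
  have h2 : b * 2 ^ (r+1) + 2 ^ r < 2 ^ (k+r+1) := by
    have hb' : b + 1 ≤ 2 ^ k := hb
    have : (b+1) * 2 ^ (r+1) ≤ 2 ^ k * 2 ^ (r+1) := Nat.mul_le_mul_right _ hb'
    have hpow : 2 ^ k * 2 ^ (r+1) = 2 ^ (k+r+1) := by rw [← pow_add]; ring_nf
    have hr : (2:ℕ) ^ r < 2 ^ (r+1) := by
      have : (2:ℕ) ^ r ≥ 1 := Nat.one_le_two_pow
      rw [pow_succ]; omega
    nlinarith
  nlinarith

lemma key_arith_right (a b k r : ℕ) :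
    a * 2 ^ (k+r+2) + 2 ^ (k+r+1) < (a * 2 ^ (k+1) + (2 ^ k + b)) * 2 ^ (r+1) + 2 ^ r := by
  have h1 : a * 2 ^ (k+1) * 2 ^ (r+1) = a * 2 ^ (k+r+2) := by
    rw [mul_assoc, ← pow_add]; ring_nf
  have h2 : (2:ℕ) ^ k * 2 ^ (r+1) = 2 ^ (k+r+1) := by rw [← pow_add]; ring_nf
  have h3 : (2:ℕ) ^ r ≥ 1 := Nat.one_le_two_pow
  have h5 : (a * 2 ^ (k+1) + (2 ^ k + b)) * 2 ^ (r+1)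
      = a * 2 ^ (k+r+2) + (2 ^ (k+r+1) + b * 2 ^ (r+1)) := by
    rw [add_mul, add_mul, h1, h2]
  rw [h5]
  have h6 := Nat.zero_le (b * 2 ^ (r+1))
  linarith

lemma key_left {n : ℕ} (x t : List Bool) (h : (x ++ false :: t).length ≤ n) :
    key n (x ++ false :: t) < key n x := by
  set m := x.length with hm
  set k := t.length with hk
  have hlen : (x ++ false :: t).length = m + k + 1 := by simp [List.length_append]; omega
  have hmn : m + k + 1 ≤ n := by omega
  obtain ⟨r, hr⟩ : ∃ r, n = m + k + 1 + r := ⟨n - (m+k+1), by omega⟩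
  have e1 : n + 1 - (x ++ false :: t).length = r + 1 := by omega
  have e2 : n - (x ++ false :: t).length = r := by omega
  have e3 : n + 1 - m = k + r + 2 := by omega
  have e4 : n - m = k + r + 1 := by omega
  have etn : toNum (x ++ false :: t) = toNum x * 2 ^ (k+1) + toNum t := by
    rw [toNum_append, toNum_cons]; simp [hk]
  unfold key
  rw [e1, e2, ← hm, e3, e4, etn]
  exact key_arith_left (toNum x) (toNum t) k r (by simpa [hk] using toNum_lt t)

lemma key_right {n : ℕ} (x t : List Bool) (h : (x ++ true :: t).length ≤ n) :
    key n x < key n (x ++ true :: t) := by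
  set m := x.length with hm
  set k := t.length with hk
  have hlen : (x ++ true :: t).length = m + k + 1 := by simp [List.length_append]; omega
  have hmn : m + k + 1 ≤ n := by omega
  obtain ⟨r, hr⟩ : ∃ r, n = m + k + 1 + r := ⟨n - (m+k+1), by omega⟩
  have e1 : n + 1 - (x ++ true :: t).length = r + 1 := by omega
  have e2 : n - (x ++ true :: t).length = r := by omega
  have e3 : n + 1 - m = k + r + 2 := by omega
  have e4 : n - m = k + r + 1 := by omega
  have etn : toNum (x ++ true :: t) = toNum x * 2 ^ (k+1) + (2 ^ k + toNum t) := by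
    rw [toNum_append, toNum_cons]; simp [hk]
  unfold key
  rw [e1, e2, ← hm, e3, e4, etn]
  exact key_arith_right (toNum x) (toNum t) k r

namespace Stmt5Aux

variable {n : ℕ}

lemma key_y_lt_x (V : Vee n) : key n V.y < key n V.x := by
  obtain ⟨t, ht⟩ := V.hxy
  have := V.hy
  rw [ht] at this ⊢
  exact key_left V.x t this

lemma key_x_lt_z (V : Vee n) : key n V.x < key n V.z := by
  obtain ⟨t, ht⟩ := V.hxz
  have := V.hz
  rw [ht] at this ⊢
  exact key_right V.x t this

/-- The bag at time `t`. -/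
def bagSet (n t : ℕ) : Set (Vee n) := {V | 2 * key n V.y + 1 ≤ t ∧ t ≤ 2 * key n V.z}

/-- If `A.z = B.x` then `key A.x < key B.y`. -/
lemma key_Ax_lt_By {A B : Vee n} (h : A.z = B.x) : key n A.x < key n B.y := by
  obtain ⟨u, hu⟩ := B.hxy
  obtain ⟨s, hs⟩ := A.hxz
  have hBy : B.y = A.x ++ true :: (s ++ false :: u) := by
    rw [hu, ← h, hs, List.append_assoc, List.cons_append]
  have hlen : (A.x ++ true :: (s ++ false :: u)).length ≤ n := by
    rw [← hBy]; exact B.hy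
  rw [hBy]
  exact key_right A.x _ hlen

/-- If `A.y = B.x` then `key B.z < key A.x`. -/
lemma key_Bz_lt_Ax {A B : Vee n} (h : A.y = B.x) : key n B.z < key n A.x := by
  obtain ⟨u, hu⟩ := A.hxy
  obtain ⟨s, hs⟩ := B.hxz
  have hBz : B.z = A.x ++ false :: (u ++ true :: s) := by
    rw [hs, ← h, hu, List.append_assoc, List.cons_append]
  have hlen : (A.x ++ false :: (u ++ true :: s)).length ≤ n := by
    rw [← hBz]; exact B.hz
  rw [hBz]
  exact key_left A.x _ hlen

/-- In a common bag, with `A.z = B.x`, colors are forced apart. -/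
lemma split_z {t : ℕ} {A B : Vee n} (hA : A ∈ bagSet n t) (hB : B ∈ bagSet n t)
    (h : A.z = B.x) : 2 * key n A.x < t ∧ t ≤ 2 * key n B.x := by
  constructor
  · have h1 := hB.1
    have h2 := key_Ax_lt_By h
    omega
  · have := hA.2
    rw [h] at this
    exact this

lemma split_y {t : ℕ} {A B : Vee n} (hA : A ∈ bagSet n t) (hB : B ∈ bagSet n t)
    (h : A.y = B.x) : 2 * key n B.x < t ∧ t ≤ 2 * key n A.x := by
  constructor
  · have h1 := hA.1
    rw [h] at h1
    omega
  · have h2 := hB.2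
    have h3 := key_Bz_lt_Ax h
    omega

/-- Each bag is 2-colorable. -/
lemma bag_colorable (n t : ℕ) : ((GraphV n).induce (bagSet n t)).Colorable 2 := by
  refine ⟨SimpleGraph.Coloring.mk
    (fun V => if t ≤ 2 * key n V.val.x then (0 : Fin 2) else 1) ?_⟩
  rintro ⟨A, hA⟩ ⟨B, hB⟩ hadj
  have hadj' : (GraphV n).Adj A B := hadj
  rw [GraphV, SimpleGraph.fromRel_adj] at hadj'
  obtain ⟨-, hrel⟩ := hadj'
  simp only
  rcases hrel with (h | h) | (h | h)
  · obtain ⟨c1, c2⟩ := split_z hA hB h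
    rw [if_neg (by omega), if_pos c2]; simp
  · obtain ⟨c1, c2⟩ := split_y hA hB h
    rw [if_pos c2, if_neg (by omega)]; simp
  · obtain ⟨c1, c2⟩ := split_z hB hA h
    rw [if_pos c2, if_neg (by omega)]; simp
  · obtain ⟨c1, c2⟩ := split_y hB hA h
    rw [if_neg (by omega), if_pos c2]; simp

/-- Intervals of naturals induce connected subgraphs of the path. -/
lemma interval_connected (a b : ℕ) (hab : a ≤ b) :
    (pathGraphN.induce {t | a ≤ t ∧ t ≤ b}).Connected := by
  have hmem : a ∈ {t | a ≤ t ∧ t ≤ b} := ⟨le_refl a, hab⟩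
  rw [SimpleGraph.connected_iff]
  refine ⟨?_, ⟨⟨a, hmem⟩⟩⟩
  have reach : ∀ k (hk : a + k ≤ b),
      (pathGraphN.induce {t | a ≤ t ∧ t ≤ b}).Reachable ⟨a, hmem⟩
        ⟨a + k, ⟨Nat.le_add_right a k, hk⟩⟩ := by
    intro k
    induction k with
    | zero => intro _; exact SimpleGraph.Reachable.refl _
    | succ k ih =>
        intro hk
        have h1 : a + k ≤ b := by omega
        refine (ih h1).trans (SimpleGraph.Adj.reachable ?_)
        show pathGraphN.Adj (a + k) (a + (k+1))
        rw [pathGraphN, SimpleGraph.fromRel_adj]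
        exact ⟨by omega, Or.inl (by omega)⟩
  rintro ⟨u, hu1, hu2⟩ ⟨v, hv1, hv2⟩
  obtain ⟨k, rfl⟩ : ∃ k, u = a + k := ⟨u - a, by omega⟩
  obtain ⟨l, rfl⟩ : ∃ l, v = a + l := ⟨v - a, by omega⟩
  exact (reach k hu2).symm.trans (reach l hv2)

/-- The path decomposition of `GraphV n`. -/
def D (n : ℕ) : TreeDecomp (GraphV n) pathGraphN where
  bag t := bagSet n t
  covers_vertex V := by
    refine ⟨2 * key n V.y + 1, le_refl _, ?_⟩
    have h1 := key_y_lt_x V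
    have h2 := key_x_lt_z V
    omega
  covers_edge := by
    intro A B hadj
    rw [GraphV, SimpleGraph.fromRel_adj] at hadj
    obtain ⟨-, hrel⟩ := hadj
    have cover : ∀ P Q : Vee n, (P.z = Q.x ∨ P.y = Q.x) →
        ∃ t, P ∈ bagSet n t ∧ Q ∈ bagSet n t := by
      intro P Q h
      have hPy := key_y_lt_x P
      have hPz := key_x_lt_z P
      have hQy := key_y_lt_x Q
      have hQz := key_x_lt_z Q
      rcases h with h | h
      · have h' : key n P.z = key n Q.x := by rw [h]
        exact ⟨2 * key n Q.x, ⟨by omega, by omega⟩, ⟨by omega, by omega⟩⟩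
      · have h' : key n P.y = key n Q.x := by rw [h]
        exact ⟨2 * key n Q.x + 1, ⟨by omega, by omega⟩, ⟨by omega, by omega⟩⟩
    rcases hrel with h | h
    · exact cover A B h
    · obtain ⟨t, h1, h2⟩ := cover B A h
      exact ⟨t, h2, h1⟩
  bags_connected V := by
    have h1 := key_y_lt_x V
    have h2 := key_x_lt_z V
    have : {t | V ∈ bagSet n t} = {t | 2 * key n V.y + 1 ≤ t ∧ t ≤ 2 * key n V.z} := rfl
    rw [this]
    exact interval_connected _ _ (by omega)

end Stmt5Aux

/-- For every `n ≥ 1` the graph `G n` of V's has path-chromatic number at most 2. -/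
theorem stmt5 (n : ℕ) (hn : 1 ≤ n) : pathChi (GraphV n) ≤ 2 := by
  have hchi : (Stmt5Aux.D n).chi ≤ 2 := by
    rw [TreeDecomp.chi]
    apply iSup_le
    intro t
    have hc := Stmt5Aux.bag_colorable n t
    have := hc.chromaticNumber_le
    exact_mod_cast this
  exact le_trans (sInf_le ⟨Stmt5Aux.D n, rfl⟩) hchi
end

section
/- For every n ≥ 1, the graph H_n of V's and Y's in the complete binary tree T_n has tree-chromatic number at most 2. -/
open SimpleGraph

/-- A "Y" in `T n`: a lowest leaf `b`, a branch point `x` strictly above `b`,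
and upper leaves `y` (left) and `z` (right) above `x`. -/
structure Wye (n : ℕ) where
  b : List Bool
  x : List Bool
  y : List Bool
  z : List Bool
  hb : b.length ≤ n
  hx : x.length ≤ n
  hy : y.length ≤ n
  hz : z.length ≤ n
  hbx : b <+: x
  hbxne : b ≠ x
  hxy : leftAbove x y
  hxz : rightAbove x z

/-- Adjacency relation for `H n`: an upper leaf of one element equals the
low point / lowest leaf of the other. -/
def relH (n : ℕ) : (Vee n ⊕ Wye n) → (Vee n ⊕ Wye n) → Prop
  | Sum.inl V₁, Sum.inl V₂ => V₁.z = V₂.x ∨ V₁.y = V₂.x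
  | Sum.inr Y₁, Sum.inr Y₂ => Y₁.y = Y₂.b ∨ Y₁.z = Y₂.b
  | Sum.inr Y, Sum.inl V => Y.y = V.x ∨ Y.z = V.x
  | Sum.inl _, Sum.inr _ => False

/-- The graph `H n` of V's and Y's in `T n`. -/
def GraphH (n : ℕ) : SimpleGraph (Vee n ⊕ Wye n) := SimpleGraph.fromRel (relH n)


namespace Stmt7Aux

/-- The infinite binary tree graph on `List Bool`. -/
def BT : SimpleGraph (List Bool) :=
  SimpleGraph.fromRel (fun s t => ∃ b : Bool, t = s ++ [b])

lemma BT_adj {s t : List Bool} :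
    BT.Adj s t ↔ s ≠ t ∧ ((∃ b, t = s ++ [b]) ∨ (∃ b, s = t ++ [b])) := by
  simp [BT, SimpleGraph.fromRel_adj]

lemma BT_adj_up (s : List Bool) (b : Bool) : BT.Adj s (s ++ [b]) := by
  rw [BT_adj]
  refine ⟨fun h => by simpa using congrArg List.length h, Or.inl ⟨b, rfl⟩⟩

lemma pfx_antisymm {s t : List Bool} (h1 : s <+: t) (h2 : t <+: s) : s = t :=
  h1.eq_of_length (Nat.le_antisymm h1.length_le h2.length_le)

lemma not_prefix_of_ne {x a b : List Bool} {c d : Bool} (hcd : c ≠ d) :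
    ¬ (x ++ c :: a <+: x ++ d :: b) := by
  rintro ⟨r, hr⟩
  rw [List.append_assoc, List.cons_append] at hr
  have := List.append_cancel_left hr
  exact hcd (List.head_eq_of_cons_eq this)

lemma prefix_dropLast {p t : List Bool} (h : p <+: t) (hne : p ≠ t) :
    p <+: t.dropLast := by
  have hlt : p.length < t.length :=
    lt_of_le_of_ne h.length_le (fun e => hne (h.eq_of_length e))
  refine List.prefix_of_prefix_length_le h (List.dropLast_prefix t) ?_
  rw [List.length_dropLast]
  omega

lemma BT_reach_nil : ∀ (k : ℕ) (t : List Bool), t.length ≤ k → BT.Reachable t []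
  | 0, t, h => by
      have : t = [] := List.length_eq_zero_iff.mp (Nat.le_zero.mp h)
      exact this ▸ SimpleGraph.Reachable.refl _
  | k + 1, t, h => by
      rcases List.eq_nil_or_concat t with rfl | ⟨l, b, rfl⟩
      · exact SimpleGraph.Reachable.refl _
      · rw [List.concat_eq_append] at h ⊢
        have h1 : BT.Adj l (l ++ [b]) := BT_adj_up l b
        have h2 : l.length ≤ k := by
          have := h; simp only [List.length_append, List.length_cons,
            List.length_nil] at this; omega
        exact (h1.reachable.symm).trans (BT_reach_nil k l h2)

lemma BT_connected : BT.Connected := by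
  haveI : Nonempty (List Bool) := ⟨[]⟩
  refine SimpleGraph.Connected.mk fun u v => ?_
  exact (BT_reach_nil u.length u le_rfl).trans (BT_reach_nil v.length v le_rfl).symm

lemma BT_cross {s : List Bool} {b : Bool} {u v : List Bool} (hadj : BT.Adj u v)
    (hu : ¬ (s ++ [b] <+: u)) (hv : s ++ [b] <+: v) : u = s ∧ v = s ++ [b] := by
  rcases BT_adj.mp hadj with ⟨hne, ⟨c, rfl⟩ | ⟨c, rfl⟩⟩
  · -- v = u ++ [c]
    have hlen : u.length ≤ s.length := by
      by_contra hgt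
      refine hu (List.prefix_of_prefix_length_le hv ⟨[c], rfl⟩ ?_)
      simp only [List.length_append, List.length_cons, List.length_nil]
      omega
    have hlen2 : (s ++ [b]).length ≤ (u ++ [c]).length := hv.length_le
    have heq : s ++ [b] = u ++ [c] := hv.eq_of_length (by
      simp only [List.length_append, List.length_cons, List.length_nil] at hlen2 ⊢
      omega)
    have hus : u = s := by
      have := congrArg List.dropLast heq
      simpa using this.symm
    exact ⟨hus, by rw [heq, hus]⟩
  · -- u = v ++ [c]
    exact absurd (hv.trans ⟨[c], rfl⟩) hu

lemma BT_bridge_up (s : List Bool) (b : Bool) : BT.IsBridge s(s, s ++ [b]) := by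
  rw [SimpleGraph.isBridge_iff_adj_and_forall_walk_mem_edges]
  refine fun p => ?_
  obtain ⟨d, hd, hdS⟩ := p.exists_boundary_dart {u | ¬ (s ++ [b] <+: u)}
    (by simp only [Set.mem_setOf_eq]
        intro hpre
        have := hpre.length_le
        simp at this)
    (by simp only [Set.mem_setOf_eq, not_not]
        exact List.prefix_refl _)
  obtain ⟨h1, h2⟩ := BT_cross d.adj hdS.1 (not_not.mp hdS.2)
  have hedge : d.edge = s(s, s ++ [b]) := by
    rw [SimpleGraph.Dart.edge, show d.toProd = (d.fst, d.snd) from rfl, h1, h2]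
  exact hedge ▸ (List.mem_map_of_mem (f := SimpleGraph.Dart.edge) hd)

lemma BT_acyclic : BT.IsAcyclic := by
  rw [SimpleGraph.isAcyclic_iff_forall_adj_isBridge]
  intro v w hadj
  rcases BT_adj.mp hadj with ⟨hne, ⟨b, rfl⟩ | ⟨b, rfl⟩⟩
  · exact BT_bridge_up v b
  · rw [Sym2.eq_swap]; exact BT_bridge_up w b

lemma BT_isTree : BT.IsTree := ⟨BT_connected, BT_acyclic⟩

/-- Generic connectivity lemma: if `S` contains a root `r` which is a prefix of
every element of `S`, and `S` is closed under `dropLast` away from `r`, then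
the induced subgraph of `BT` on `S` is connected. -/
lemma induced_connected (r : List Bool) (S : Set (List Bool)) (hr : r ∈ S)
    (hpre : ∀ t ∈ S, r <+: t) (hcl : ∀ t ∈ S, t ≠ r → t.dropLast ∈ S) :
    (BT.induce S).Connected := by
  have main : ∀ (k : ℕ) (t : List Bool) (ht : t ∈ S), t.length ≤ k →
      (BT.induce S).Reachable ⟨t, ht⟩ ⟨r, hr⟩ := by
    intro k
    induction k with
    | zero =>
      intro t ht h
      have htnil : t = [] := List.length_eq_zero_iff.mp (Nat.le_zero.mp h)
      have : r = t := by
        have := (hpre t ht).length_le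
        rw [htnil] at this ⊢
        exact List.length_eq_zero_iff.mp (Nat.le_zero.mp this)
      subst this
      exact SimpleGraph.Reachable.refl _
    | succ k ih =>
      intro t ht h
      by_cases heq : t = r
      · subst heq; exact SimpleGraph.Reachable.refl _
      · have htne : t ≠ [] := by
          intro hnil
          apply heq
          have := (hpre t ht).length_le
          rw [hnil] at this ⊢
          exact (List.length_eq_zero_iff.mp (Nat.le_zero.mp this)).symm
        have hd : t.dropLast ∈ S := hcl t ht heq
        have hadj : (BT.induce S).Adj ⟨t, ht⟩ ⟨t.dropLast, hd⟩ := by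
          simp only [SimpleGraph.comap_adj, Function.Embedding.coe_subtype,
            SimpleGraph.induce]
          rw [BT_adj]
          constructor
          · intro hc
            have := congrArg List.length hc
            rw [List.length_dropLast] at this
            have hpos : 0 < t.length := List.length_pos_iff.mpr htne
            omega
          · exact Or.inr ⟨t.getLast htne, (List.dropLast_append_getLast htne).symm⟩
        have hlen : t.dropLast.length ≤ k := by
          rw [List.length_dropLast]
          have hpos : 0 < t.length := List.length_pos_iff.mpr htne
          omega
        exact hadj.reachable.trans (ih t.dropLast hd hlen)
  haveI : Nonempty S := ⟨⟨r, hr⟩⟩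
  refine SimpleGraph.Connected.mk fun u v => ?_
  obtain ⟨t, ht⟩ := u
  obtain ⟨t', ht'⟩ := v
  exact (main t.length t ht le_rfl).trans (main t'.length t' ht' le_rfl).symm

variable {n : ℕ}

/-- Low point of a V or Y. -/
def low : Vee n ⊕ Wye n → List Bool := Sum.elim Vee.x Wye.b

/-- Branch point of a V or Y. -/
def bp : Vee n ⊕ Wye n → List Bool := Sum.elim Vee.x Wye.x

/-- Left upper leaf. -/
def upY : Vee n ⊕ Wye n → List Bool := Sum.elim Vee.y Wye.y

/-- Right upper leaf. -/
def upZ : Vee n ⊕ Wye n → List Bool := Sum.elim Vee.z Wye.z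

lemma low_pfx_bp (u : Vee n ⊕ Wye n) : low u <+: bp u := by
  cases u with
  | inl V => exact List.prefix_refl _
  | inr Y => exact Y.hbx

lemma bp_left (u : Vee n ⊕ Wye n) : leftAbove (bp u) (upY u) := by
  cases u with
  | inl V => exact V.hxy
  | inr Y => exact Y.hxy

lemma bp_right (u : Vee n ⊕ Wye n) : rightAbove (bp u) (upZ u) := by
  cases u with
  | inl V => exact V.hxz
  | inr Y => exact Y.hxz

lemma bp_pfx_upY (u : Vee n ⊕ Wye n) : bp u <+: upY u := by
  obtain ⟨t, ht⟩ := bp_left u; exact ⟨false :: t, ht.symm⟩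

lemma bp_pfx_upZ (u : Vee n ⊕ Wye n) : bp u <+: upZ u := by
  obtain ⟨t, ht⟩ := bp_right u; exact ⟨true :: t, ht.symm⟩

lemma low_pfx_upY (u : Vee n ⊕ Wye n) : low u <+: upY u :=
  (low_pfx_bp u).trans (bp_pfx_upY u)

lemma low_pfx_upZ (u : Vee n ⊕ Wye n) : low u <+: upZ u :=
  (low_pfx_bp u).trans (bp_pfx_upZ u)

lemma relH_imp {u v : Vee n ⊕ Wye n} (h : relH n u v) :
    upY u = low v ∨ upZ u = low v := by
  cases u with
  | inl V₁ =>
    cases v with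
    | inl V₂ => exact h.symm.imp (fun e => e) (fun e => e)
    | inr _ => exact absurd h (by simp [relH])
  | inr Y₁ =>
    cases v with
    | inl V₂ => exact h
    | inr Y₂ => exact h

/-- The bag at node `t`. -/
def bag (n : ℕ) (t : List Bool) : Set (Vee n ⊕ Wye n) :=
  {u | low u <+: t ∧ (t <+: upY u ∨ t <+: upZ u)}

lemma low_mem_bag (u : Vee n ⊕ Wye n) : u ∈ bag n (low u) :=
  ⟨List.prefix_refl _, Or.inl (low_pfx_upY u)⟩

/-- Key fact: if `t` is in the subtree of `u` and an upper leaf `p` of `u`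
is a prefix of `t`, then `t = p` and the low point of `u` is not `t`. -/
lemma key {t : List Bool} {u : Vee n ⊕ Wye n} (hu : u ∈ bag n t)
    {p : List Bool} (hp : p = upY u ∨ p = upZ u) (hpt : p <+: t) :
    t = p ∧ low u ≠ t := by
  obtain ⟨hl, hor⟩ := hu
  obtain ⟨a, ha⟩ := bp_left u
  obtain ⟨c, hc⟩ := bp_right u
  have htp : t = p := by
    rcases hp with rfl | rfl
    · rcases hor with h | h
      · exact pfx_antisymm h hpt
      · exfalso
        have hyz : upY u <+: upZ u := hpt.trans h
        rw [ha, hc] at hyz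
        exact not_prefix_of_ne (by simp) hyz
    · rcases hor with h | h
      · exfalso
        have hzy : upZ u <+: upY u := hpt.trans h
        rw [ha, hc] at hzy
        exact not_prefix_of_ne (by simp) hzy
      · exact pfx_antisymm h hpt
  refine ⟨htp, fun hlow => ?_⟩
  have h1 : bp u <+: p := by
    rcases hp with rfl | rfl
    · exact bp_pfx_upY u
    · exact bp_pfx_upZ u
  have h2 : p <+: bp u := by
    rw [← hlow.trans htp]
    exact low_pfx_bp u
  have h3 : p = bp u := pfx_antisymm h2 h1
  have h4 : (bp u).length < p.length := by
    rcases hp with rfl | rfl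
    · rw [ha]; simp
    · rw [hc]; simp
  rw [h3] at h4
  exact lt_irrefl _ h4

/-- The tree-decomposition of `GraphH n` over the binary tree `BT`. -/
def decomp (n : ℕ) : TreeDecomp (GraphH n) BT where
  bag := fun t => bag n t
  covers_vertex := fun u => ⟨low u, low_mem_bag u⟩
  covers_edge := by
    intro u v hadj
    rw [GraphH, SimpleGraph.fromRel_adj] at hadj
    obtain ⟨hne, hrel⟩ := hadj
    -- by symmetry of the goal, handle one direction via a helper
    have helper : ∀ a b : Vee n ⊕ Wye n, relH n a b →
        ∃ t, a ∈ bag n t ∧ b ∈ bag n t := by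
      intro a b hab
      refine ⟨low b, ?_, low_mem_bag b⟩
      rcases relH_imp hab with h | h
      · exact ⟨h ▸ low_pfx_upY a, Or.inl (h ▸ List.prefix_refl _)⟩
      · exact ⟨h ▸ low_pfx_upZ a, Or.inr (h ▸ List.prefix_refl _)⟩
    rcases hrel with h | h
    · exact helper u v h
    · obtain ⟨t, h1, h2⟩ := helper v u h
      exact ⟨t, h2, h1⟩
  bags_connected := by
    intro u
    refine induced_connected (low u) _ (low_mem_bag u) (fun t ht => ht.1) ?_
    intro t ht hne
    obtain ⟨h1, h2⟩ := ht
    refine ⟨prefix_dropLast h1 (fun e => hne e.symm), ?_⟩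
    rcases h2 with h | h
    · exact Or.inl ((List.dropLast_prefix t).trans h)
    · exact Or.inr ((List.dropLast_prefix t).trans h)

lemma bag_colorable (n : ℕ) (t : List Bool) :
    ((GraphH n).induce (bag n t)).Colorable 2 := by
  refine ⟨SimpleGraph.Coloring.mk
    (fun u => if low u.val = t then (0 : Fin 2) else 1) ?_⟩
  rintro ⟨u, hu⟩ ⟨v, hv⟩ hadj
  have hadj' : (GraphH n).Adj u v := hadj
  rw [GraphH, SimpleGraph.fromRel_adj] at hadj'
  obtain ⟨hne, hrel⟩ := hadj'
  simp only [ne_eq]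
  have helper : ∀ (a b : Vee n ⊕ Wye n), a ∈ bag n t → b ∈ bag n t →
      relH n a b → low b = t ∧ low a ≠ t := by
    intro a b ha hb hab
    have hp : low b = upY a ∨ low b = upZ a := by
      rcases relH_imp hab with h | h
      · exact Or.inl h.symm
      · exact Or.inr h.symm
    have hpt : low b <+: t := hb.1
    obtain ⟨h1, h2⟩ := key ha hp hpt
    have h3 : t = low b := by
      rcases hp with h | h
      · rw [h1, h]
      · rw [h1, h]
    exact ⟨h3.symm, h2⟩
  rcases hrel with h | h
  · obtain ⟨h1, h2⟩ := helper u v hu hv h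
    simp [h1, h2]
  · obtain ⟨h1, h2⟩ := helper v u hv hu h
    simp [h1, h2]

end Stmt7Aux

/-- For every `n ≥ 1` the graph `H n` of V's and Y's has tree-chromatic number at most 2. -/
theorem stmt7 (n : ℕ) (hn : 1 ≤ n) : treeChi (GraphH n) ≤ 2 := by
  have hmem : (Stmt7Aux.decomp n).chi ∈
      {k | ∃ (ι : Type) (T : SimpleGraph ι), T.IsTree ∧
        ∃ D : TreeDecomp (GraphH n) T, D.chi = k} :=
    ⟨List Bool, Stmt7Aux.BT, Stmt7Aux.BT_isTree, Stmt7Aux.decomp n, rfl⟩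
  refine le_trans (sInf_le hmem) ?_
  rw [TreeDecomp.chi]
  refine iSup_le fun t => ?_
  have := (Stmt7Aux.bag_colorable n t).chromaticNumber_le
  exact le_trans this (by norm_num)
end

section
/- For every n ≥ 2, the chromatic number of the shift graph S_n equals the ceiling of log base 2 of n. -/
open SimpleGraph

/-- The most significant differing bit of `x < y` is `0` in `x` and `1` in `y`. -/
lemma msb_diff {x y : ℕ} (h : x < y) :
    Nat.testBit x (Nat.log 2 (x ^^^ y)) = false ∧
    Nat.testBit y (Nat.log 2 (x ^^^ y)) = true := by
  set i := Nat.log 2 (x ^^^ y) with hi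
  have hne : x ^^^ y ≠ 0 := by
    simp only [ne_eq, Nat.xor_eq_zero_iff]
    omega
  have h1 : 2 ^ i ≤ x ^^^ y := Nat.pow_log_le_self 2 hne
  have h2 : x ^^^ y < 2 ^ (i + 1) := Nat.lt_pow_succ_log_self (by norm_num) _
  have hbit : Nat.testBit (x ^^^ y) i = true := by
    rw [Nat.testBit_eq_decide_div_mod_eq]
    have hpos : 0 < 2 ^ i := Nat.pow_pos (by norm_num)
    have h3 : 1 ≤ (x ^^^ y) / 2 ^ i := (Nat.one_le_div_iff hpos).mpr h1
    have h4 : (x ^^^ y) / 2 ^ i < 2 := by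
      rw [Nat.div_lt_iff_lt_mul hpos]
      rw [pow_succ] at h2
      omega
    have : (x ^^^ y) / 2 ^ i = 1 := by omega
    simp [this]
  have habove : ∀ j, i < j → Nat.testBit x j = Nat.testBit y j := by
    intro j hj
    have : Nat.testBit (x ^^^ y) j = false :=
      Nat.testBit_lt_two_pow (lt_of_lt_of_le h2 (Nat.pow_le_pow_right (by norm_num) hj))
    rw [Nat.testBit_xor] at this
    cases hxj : Nat.testBit x j <;> cases hyj : Nat.testBit y j <;> simp_all
  rw [Nat.testBit_xor] at hbit
  cases hx : Nat.testBit x i <;> cases hy : Nat.testBit y i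
  · rw [hx, hy] at hbit; simp at hbit
  · exact ⟨rfl, rfl⟩
  · have : y < x := Nat.lt_of_testBit i hy hx (fun j hj => (habove j hj).symm)
    omega
  · rw [hx, hy] at hbit; simp at hbit

lemma shift_colorable (n : ℕ) : (ShiftGraph n).Colorable (Nat.clog 2 n) := by
  by_cases hn : n ≤ 1
  · -- graph is empty of vertices? vertices need p.2 ≤ n and 1 ≤ p.1 < p.2 so n ≥ 2 for nonempty
    have : IsEmpty (ShiftVert n) := by
      constructor
      rintro ⟨⟨a, b⟩, ha, hab, hb⟩
      omega
    exact SimpleGraph.Colorable.of_isEmpty (G := ShiftGraph n) _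
  push_neg at hn
  set k := Nat.clog 2 n with hk
  have hpow : n ≤ 2 ^ k := Nat.le_pow_clog (by norm_num) n
  refine ⟨⟨fun v => ⟨Nat.log 2 ((v.1.1 - 1) ^^^ (v.1.2 - 1)), ?_⟩, ?_⟩⟩
  · obtain ⟨⟨a, b⟩, ha, hab, hb⟩ := v
    have hne : (a - 1) ^^^ (b - 1) ≠ 0 := by
      simp only [ne_eq, Nat.xor_eq_zero_iff]; omega
    have hx : a - 1 < 2 ^ k := by omega
    have hy : b - 1 < 2 ^ k := by omega
    exact Nat.log_lt_of_lt_pow hne (Nat.xor_lt_two_pow hx hy)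
  · rintro ⟨⟨a, b⟩, ha, hab, hb⟩ ⟨⟨c, d⟩, hc, hcd, hd⟩ hadj
    simp only [ShiftGraph, SimpleGraph.fromRel_adj] at hadj
    obtain ⟨hne, hrel⟩ := hadj
    intro heq
    rcases hrel with h1 | h1
    · -- b = c : a < b, b < d
      have h1' : b = c := h1
      subst h1'
      have e1 := msb_diff (x := a - 1) (y := b - 1) (by omega)
      have e2 := msb_diff (x := b - 1) (y := d - 1) (by omega)
      have heqv : Nat.log 2 ((a - 1) ^^^ (b - 1)) = Nat.log 2 ((b - 1) ^^^ (d - 1)) :=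
        congrArg Fin.val heq
      rw [heqv] at e1
      exact absurd e2.1 (by rw [e1.2]; simp)
    · -- d = a : c < d = a < b
      have h1' : d = a := h1
      subst h1'
      have e1 := msb_diff (x := d - 1) (y := b - 1) (by omega)
      have e2 := msb_diff (x := c - 1) (y := d - 1) (by omega)
      have heqv : Nat.log 2 ((d - 1) ^^^ (b - 1)) = Nat.log 2 ((c - 1) ^^^ (d - 1)) :=
        congrArg Fin.val heq
      rw [heqv] at e1
      exact absurd e1.1 (by rw [e2.2]; simp)

lemma shift_lower (n : ℕ) (hn : 2 ≤ n) {k : ℕ} (hc : (ShiftGraph n).Colorable k) :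
    Nat.clog 2 n ≤ k := by
  classical
  obtain ⟨c⟩ := hc
  rw [Nat.clog_le_iff_le_pow (by norm_num)]
  -- map each m ∈ Fin n to the set of colors of edges [a, m+1] with a < m+1
  set f : Fin n → Finset (Fin k) := fun m =>
    Finset.univ.filter (fun col =>
      ∃ a, ∃ h : 1 ≤ a ∧ a < m.1 + 1 ∧ m.1 + 1 ≤ n, c ⟨(a, m.1 + 1), h⟩ = col) with hf
  have hinj : Function.Injective f := by
    intro m1 m2 heq
    by_contra hne
    wlog hlt : m1 < m2 generalizing m1 m2
    · exact this heq.symm (Ne.symm hne) ((not_lt.mp hlt).lt_of_ne (Ne.symm hne))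
    have hv : 1 ≤ m1.1 + 1 ∧ m1.1 + 1 < m2.1 + 1 ∧ m2.1 + 1 ≤ n := ⟨by omega, by omega, m2.2⟩
    have hmem : c ⟨(m1.1 + 1, m2.1 + 1), hv⟩ ∈ f m2 := by
      simp only [hf, Finset.mem_filter, Finset.mem_univ, true_and]
      exact ⟨m1.1 + 1, hv, rfl⟩
    rw [← heq] at hmem
    simp only [hf, Finset.mem_filter, Finset.mem_univ, true_and] at hmem
    obtain ⟨a, h, hcol⟩ := hmem
    have hadj : (ShiftGraph n).Adj ⟨(a, m1.1 + 1), h⟩ ⟨(m1.1 + 1, m2.1 + 1), hv⟩ := by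
      refine (SimpleGraph.fromRel_adj (V := ShiftVert n) _ _ _).mpr ?_
      refine ⟨?_, Or.inl rfl⟩
      intro hcontra
      have : a = m1.1 + 1 := congrArg (fun v => v.1.1) hcontra
      omega
    exact absurd hcol (c.valid hadj)
  have := Fintype.card_le_of_injective f hinj
  simpa using this

/-- The chromatic number of the shift graph `S n` is `⌈log₂ n⌉`. -/
theorem stmt8 (n : ℕ) (hn : 2 ≤ n) :
    (ShiftGraph n).chromaticNumber = (Nat.clog 2 n : ℕ∞) := by
  refine le_antisymm ((shift_colorable n).chromaticNumber_le) ?_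
  rw [SimpleGraph.chromaticNumber_eq_biInf]
  refine le_iInf₂ fun m hm => ?_
  exact_mod_cast shift_lower n hn hm
end

section
/- If a graph G contains the shift graph S_q as a subgraph with q > 2^r, then the chromatic number of G is greater than r. -/
open SimpleGraph

/-- If `G` contains `S q` as a subgraph with `q > 2 ^ r` then `χ(G) > r`. -/
theorem stmt9 {V : Type*} (G : SimpleGraph V) (q r : ℕ) (hq : 2 ^ r < q)
    (f : ShiftVert q → V) (hf : Function.Injective f)
    (hhom : ∀ u v, (ShiftGraph q).Adj u v → G.Adj (f u) (f v)) :
    (r : ℕ∞) < G.chromaticNumber := by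
  classical
  rw [← not_le]
  intro hle
  obtain ⟨C⟩ : G.Colorable r := (chromaticNumber_le_iff_colorable).mp hle
  set c : ShiftVert q → Fin r := fun v => C (f v) with hcdef
  have hvalid : ∀ u v : ShiftVert q, (ShiftGraph q).Adj u v → c u ≠ c v := by
    intro u v h
    exact C.valid (hhom u v h)
  set F : Fin q → Finset (Fin r) := fun a =>
    Finset.univ.filter (fun k => ∃ v : ShiftVert q, v.1.1 = a.val + 1 ∧ c v = k) with hF
  have key : ∀ a b : Fin q, a < b → F a ≠ F b := by
    intro a b hab hFab
    have hbq : (b : ℕ) < q := b.isLt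
    have hu : 1 ≤ (a : ℕ) + 1 ∧ (a : ℕ) + 1 < (b : ℕ) + 1 ∧ (b : ℕ) + 1 ≤ q := by
      refine ⟨Nat.le_add_left 1 _, by omega, by omega⟩
    set u : ShiftVert q := ⟨((a : ℕ) + 1, (b : ℕ) + 1), hu⟩ with hudef
    have hmem : c u ∈ F a := by
      simp only [hF, Finset.mem_filter, Finset.mem_univ, true_and]
      exact ⟨u, rfl, rfl⟩
    rw [hFab] at hmem
    simp only [hF, Finset.mem_filter, Finset.mem_univ, true_and] at hmem
    obtain ⟨v, hv1, hv2⟩ := hmem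
    have hne : u ≠ v := by
      intro h
      rw [h] at hudef
      have : v.1.1 = (a : ℕ) + 1 := by rw [hudef]
      omega
    have hadj : (ShiftGraph q).Adj u v := by
      refine ⟨hne, Or.inl ?_⟩
      show u.1.2 = v.1.1
      rw [hv1]
    exact hvalid u v hadj hv2.symm
  have hFinj : Function.Injective F := by
    intro a b hab
    by_contra hne
    rcases lt_or_gt_of_ne hne with h | h
    · exact key a b h hab
    · exact key b a h hab.symm
  have hcard := Fintype.card_le_of_injective F hFinj
  simp only [Fintype.card_fin, Fintype.card_finset] at hcard
  omega
end

section
/- Let p ≥ 2 and consider the vertices c_1 < c_2 < ... < c_p along the rightmost branch of T_p (c_i is the string of i−1 ones), and for each i let d_i = c_i0 (the string of i−1 ones followed by a 0). For 1 ≤ i < j ≤ p set V[i,j] = (c_i, d_i, c_j). Then the map [i,j] ↦ V[i,j] is an embedding of the shift graph S_p into the graph G_p of V's: V[i,j] and V[k,l] are adjacent in G_p if and only if j = k or l = i. -/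
lemma repl_eq_iff (m n : ℕ) : List.replicate m true = List.replicate n true ↔ m = n := by
  constructor
  · intro h
    have := congrArg List.length h
    simpa using this
  · rintro rfl; rfl

lemma repl_ne (m n : ℕ) : List.replicate m true ++ [false] ≠ List.replicate n true := by
  intro h
  have : false ∈ List.replicate n true := by
    rw [← h]; simp
  simp at this

lemma Vee_eq_iff {n : ℕ} (V W : Vee n) : V = W ↔ V.x = W.x ∧ V.y = W.y ∧ V.z = W.z := by
  cases V; cases W; simp

/-- The map `[i,j] ↦ V[i,j] = (cᵢ, dᵢ, c_j)`, where `cᵢ` is the string of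
`i - 1` ones and `dᵢ = cᵢ0`, is an embedding of the shift graph `S p` into
the graph `G p` of V's. -/
theorem stmt10 (p : ℕ) (hp : 2 ≤ p) :
    ∃ f : ShiftVert p → Vee p,
      (∀ v, (f v).x = List.replicate (v.1.1 - 1) true ∧
            (f v).y = List.replicate (v.1.1 - 1) true ++ [false] ∧
            (f v).z = List.replicate (v.1.2 - 1) true) ∧
      Function.Injective f ∧
      (∀ u v, (ShiftGraph p).Adj u v ↔ (GraphV p).Adj (f u) (f v)) := by
  refine ⟨fun v => {
    x := List.replicate (v.1.1 - 1) true
    y := List.replicate (v.1.1 - 1) true ++ [false]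
    z := List.replicate (v.1.2 - 1) true
    hx := by have h := v.2; simp; omega
    hy := by have h := v.2; simp; omega
    hz := by have h := v.2; simp; omega
    hxy := ⟨[], by simp⟩
    hxz := by
      have h := v.2
      refine ⟨List.replicate (v.1.2 - v.1.1 - 1) true, ?_⟩
      rw [← List.replicate_succ, ← List.replicate_add]
      rw [repl_eq_iff]
      omega
  }, fun v => ⟨rfl, rfl, rfl⟩, ?_, ?_⟩
  · rintro ⟨⟨a, b⟩, ha⟩ ⟨⟨c, d⟩, hc⟩ h
    simp only [Vee_eq_iff, repl_eq_iff] at h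
    apply Subtype.ext
    simp only [Prod.mk.injEq]
    omega
  · intro u v
    simp only [ShiftGraph, GraphV, SimpleGraph.fromRel_adj, ne_eq, Subtype.mk.injEq,
      Prod.mk.injEq, Vee_eq_iff, repl_eq_iff]
    obtain ⟨⟨a, b⟩, ha⟩ := u
    obtain ⟨⟨c, d⟩, hc⟩ := v
    dsimp only
    constructor
    · rintro ⟨hne, h | h⟩
      · exact ⟨by omega, Or.inl (Or.inl (by omega))⟩
      · exact ⟨by omega, Or.inr (Or.inl (by omega))⟩
    · rintro ⟨hne, (h | h) | (h | h)⟩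
      · exact ⟨by intro he; injection he with h'; injection h' with h1 h2; subst h1; subst h2; exact hne ⟨rfl, rfl, rfl⟩, Or.inl (by omega)⟩
      · exact absurd h (repl_ne _ _)
      · exact ⟨by intro he; injection he with h'; injection h' with h1 h2; subst h1; subst h2; exact hne ⟨rfl, rfl, rfl⟩, Or.inr (by omega)⟩
      · exact absurd h (repl_ne _ _)
end

section
/- With the geometric embedding π of T_n into the real line (π(x) = Σ_i ε_i 2^{-(i-1)} with ε_i = ±1 according to the i-th bit of x), assigning to each V = (x,y,z) the real interval [π(y), π(z)] yields: for any two adjacent V's in G_n, their assigned intervals intersect. -/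
/-- The horizontal coordinate of the geometric embedding of the binary tree:
`π(x) = Σᵢ εᵢ 2^{-(i-1)}` with `εᵢ = 1` if bit `i` is `1` and `εᵢ = -1` otherwise. -/
noncomputable def piCoord : List Bool → ℝ
  | [] => 0
  | b :: t => (if b then 1 else -1) + piCoord t / 2


lemma abs_piCoord_le (l : List Bool) : |piCoord l| ≤ 2 := by
  induction l with
  | nil => simp [piCoord]
  | cons b t ih =>
    have := abs_add_le (if b then (1:ℝ) else -1) (piCoord t / 2)
    have h2 : |piCoord t / 2| ≤ 1 := by
      rw [abs_div]
      simp only [abs_two]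
      linarith
    have h1 : |if b then (1:ℝ) else -1| = 1 := by split <;> simp
    calc |piCoord (b :: t)| ≤ |if b then (1:ℝ) else -1| + |piCoord t / 2| := this
      _ ≤ 1 + 1 := by rw [h1]; linarith
      _ = 2 := by norm_num

lemma piCoord_append (x s : List Bool) :
    piCoord (x ++ s) = piCoord x + piCoord s / 2 ^ x.length := by
  induction x with
  | nil => simp [piCoord]
  | cons b t ih =>
    have e : (b :: t) ++ s = b :: (t ++ s) := rfl
    rw [e, piCoord, piCoord, ih, List.length_cons]
    ring

lemma piCoord_left {x y : List Bool} (h : leftAbove x y) : piCoord y ≤ piCoord x := by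
  obtain ⟨t, rfl⟩ := h
  rw [piCoord_append]
  have := abs_piCoord_le t
  have hb : piCoord (false :: t) ≤ 0 := by
    simp only [piCoord, if_neg Bool.false_ne_true]
    cases abs_le.mp this; linarith
  have hp : (0:ℝ) < 2 ^ x.length := by positivity
  have := div_nonpos_of_nonpos_of_nonneg hb hp.le
  linarith

lemma piCoord_right {x z : List Bool} (h : rightAbove x z) : piCoord x ≤ piCoord z := by
  obtain ⟨t, rfl⟩ := h
  rw [piCoord_append]
  have := abs_piCoord_le t
  have hb : 0 ≤ piCoord (true :: t) := by
    simp only [piCoord, if_pos]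
    cases abs_le.mp this; linarith
  have hp : (0:ℝ) < 2 ^ x.length := by positivity
  have := div_nonneg hb hp.le
  linarith

lemma vee_le {n : ℕ} (V : Vee n) : piCoord V.y ≤ piCoord V.x ∧ piCoord V.x ≤ piCoord V.z :=
  ⟨piCoord_left V.hxy, piCoord_right V.hxz⟩

/-- Assigning to each V `(x,y,z)` the real interval `[π y, π z]`, the intervals
of any two adjacent V's intersect. -/
theorem stmt13 (n : ℕ) (V₁ V₂ : Vee n) (h : (GraphV n).Adj V₁ V₂) :
    ∃ t : ℝ, piCoord V₁.y ≤ t ∧ t ≤ piCoord V₁.z ∧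
      piCoord V₂.y ≤ t ∧ t ≤ piCoord V₂.z := by
  obtain ⟨hy1, hz1⟩ := vee_le V₁
  obtain ⟨hy2, hz2⟩ := vee_le V₂
  obtain ⟨-, (h | h) | (h | h)⟩ := h
  · rw [← h] at hy2 hz2
    exact ⟨piCoord V₁.z, by linarith, le_refl _, hy2, hz2⟩
  · rw [← h] at hy2 hz2
    exact ⟨piCoord V₁.y, le_refl _, by linarith, hy2, hz2⟩
  · rw [← h] at hy1 hz1
    exact ⟨piCoord V₂.z, hy1, hz1, by linarith, le_refl _⟩
  · rw [← h] at hy1 hz1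
    exact ⟨piCoord V₂.y, hy1, hz1, le_refl _, by linarith⟩
end

section
/- In G_n for n ≥ 4, the five vertices V₁=(∅,0,1), V₂=(1,10,11), V₃=(10,100,101), V₄=(101,1010,1011), V₅=(1,101,11) form an induced 5-cycle; consequently, since G_n is triangle-free, the chromatic number of the subgraph induced by {V₁,...,V₅} is 3. -/
open SimpleGraph

def v1 (n : ℕ) (hn : 4 ≤ n) : Vee n :=
  ⟨[], [false], [true], by simp, by simp; omega, by simp; omega, ⟨[], rfl⟩, ⟨[], rfl⟩⟩
def v2 (n : ℕ) (hn : 4 ≤ n) : Vee n :=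
  ⟨[true], [true, false], [true, true], by simp; omega, by simp; omega, by simp; omega,
    ⟨[], rfl⟩, ⟨[], rfl⟩⟩
def v3 (n : ℕ) (hn : 4 ≤ n) : Vee n :=
  ⟨[true, false], [true, false, false], [true, false, true], by simp; omega, by simp; omega,
    by simp; omega, ⟨[], rfl⟩, ⟨[], rfl⟩⟩
def v4 (n : ℕ) (hn : 4 ≤ n) : Vee n :=
  ⟨[true, false, true], [true, false, true, false], [true, false, true, true], by simp; omega,
    by simp; omega, by simp; omega, ⟨[], rfl⟩, ⟨[], rfl⟩⟩
def v5 (n : ℕ) (hn : 4 ≤ n) : Vee n :=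
  ⟨[true], [true, false, true], [true, true], by simp; omega, by simp; omega, by simp; omega,
    ⟨[true], rfl⟩, ⟨[], rfl⟩⟩

def col {n : ℕ} (V : Vee n) : Fin 3 :=
  if V.x = [] then 0
  else if V.x = [true, false] then 0
  else if V.x = [true, false, true] then 1
  else if V.y = [true, false] then 1
  else 2


/-- The five explicit V's form an induced 5-cycle in `G n` (for `n ≥ 4`), and the
chromatic number of the subgraph they induce is 3. -/
theorem stmt15 (n : ℕ) (hn : 4 ≤ n) :
    ∃ V₁ V₂ V₃ V₄ V₅ : Vee n,
      (V₁.x = [] ∧ V₁.y = [false] ∧ V₁.z = [true]) ∧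
      (V₂.x = [true] ∧ V₂.y = [true, false] ∧ V₂.z = [true, true]) ∧
      (V₃.x = [true, false] ∧ V₃.y = [true, false, false] ∧ V₃.z = [true, false, true]) ∧
      (V₄.x = [true, false, true] ∧ V₄.y = [true, false, true, false] ∧
        V₄.z = [true, false, true, true]) ∧
      (V₅.x = [true] ∧ V₅.y = [true, false, true] ∧ V₅.z = [true, true]) ∧
      ((GraphV n).Adj V₁ V₂ ∧ (GraphV n).Adj V₂ V₃ ∧ (GraphV n).Adj V₃ V₄ ∧
        (GraphV n).Adj V₄ V₅ ∧ (GraphV n).Adj V₅ V₁) ∧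
      (¬ (GraphV n).Adj V₁ V₃ ∧ ¬ (GraphV n).Adj V₁ V₄ ∧ ¬ (GraphV n).Adj V₂ V₄ ∧
        ¬ (GraphV n).Adj V₂ V₅ ∧ ¬ (GraphV n).Adj V₃ V₅) ∧
      ((GraphV n).induce {V₁, V₂, V₃, V₄, V₅}).chromaticNumber = 3 := by

  have h12 : (GraphV n).Adj (v1 n hn) (v2 n hn) := by
    simp [GraphV, SimpleGraph.fromRel_adj, v1, v2, Vee.mk.injEq]
    exact fun h => absurd (congrArg Vee.x h) (by simp)
  have h23 : (GraphV n).Adj (v2 n hn) (v3 n hn) := by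
    simp [GraphV, SimpleGraph.fromRel_adj, v2, v3, Vee.mk.injEq]
    exact fun h => absurd (congrArg Vee.x h) (by simp)
  have h34 : (GraphV n).Adj (v3 n hn) (v4 n hn) := by
    simp [GraphV, SimpleGraph.fromRel_adj, v3, v4, Vee.mk.injEq]
    exact fun h => absurd (congrArg Vee.x h) (by simp)
  have h45 : (GraphV n).Adj (v4 n hn) (v5 n hn) := by
    simp [GraphV, SimpleGraph.fromRel_adj, v4, v5, Vee.mk.injEq]
    exact fun h => absurd (congrArg Vee.x h) (by simp)
  have h51 : (GraphV n).Adj (v5 n hn) (v1 n hn) := by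
    simp [GraphV, SimpleGraph.fromRel_adj, v5, v1, Vee.mk.injEq]
    exact fun h => absurd (congrArg Vee.x h) (by simp)
  have h13 : ¬ (GraphV n).Adj (v1 n hn) (v3 n hn) := by
    simp [GraphV, SimpleGraph.fromRel_adj, v1, v3, Vee.mk.injEq]
  have h14 : ¬ (GraphV n).Adj (v1 n hn) (v4 n hn) := by
    simp [GraphV, SimpleGraph.fromRel_adj, v1, v4, Vee.mk.injEq]
  have h24 : ¬ (GraphV n).Adj (v2 n hn) (v4 n hn) := by
    simp [GraphV, SimpleGraph.fromRel_adj, v2, v4, Vee.mk.injEq]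
  have h25 : ¬ (GraphV n).Adj (v2 n hn) (v5 n hn) := by
    simp [GraphV, SimpleGraph.fromRel_adj, v2, v5, Vee.mk.injEq]
  have h35 : ¬ (GraphV n).Adj (v3 n hn) (v5 n hn) := by
    simp [GraphV, SimpleGraph.fromRel_adj, v3, v5, Vee.mk.injEq]
  set S : Set (Vee n) := {v1 n hn, v2 n hn, v3 n hn, v4 n hn, v5 n hn} with hS
  have hcol3 : ((GraphV n).induce S).Colorable 3 := by
    refine ⟨Coloring.mk (fun v => col v.1) ?_⟩
    rintro ⟨a, ha⟩ ⟨b, hb⟩ hab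
    simp only [hS, Set.mem_insert_iff, Set.mem_singleton_iff] at ha hb
    have hab' : (GraphV n).Adj a b := hab
    rcases ha with rfl|rfl|rfl|rfl|rfl <;> rcases hb with rfl|rfl|rfl|rfl|rfl <;>
      first
        | exact absurd rfl hab'.ne
        | exact absurd hab' h13 | exact absurd hab'.symm h13
        | exact absurd hab' h14 | exact absurd hab'.symm h14
        | exact absurd hab' h24 | exact absurd hab'.symm h24
        | exact absurd hab' h25 | exact absurd hab'.symm h25
        | exact absurd hab' h35 | exact absurd hab'.symm h35
        | simp [col, v1, v2, v3, v4, v5]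
  have hnot2 : ¬ ((GraphV n).induce S).Colorable 2 := by
    rintro ⟨C⟩
    have m1 : v1 n hn ∈ S := by simp [hS]
    have m2 : v2 n hn ∈ S := by simp [hS]
    have m3 : v3 n hn ∈ S := by simp [hS]
    have m4 : v4 n hn ∈ S := by simp [hS]
    have m5 : v5 n hn ∈ S := by simp [hS]
    have e12 : C ⟨_, m1⟩ ≠ C ⟨_, m2⟩ := C.valid h12
    have e23 : C ⟨_, m2⟩ ≠ C ⟨_, m3⟩ := C.valid h23
    have e34 : C ⟨_, m3⟩ ≠ C ⟨_, m4⟩ := C.valid h34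
    have e45 : C ⟨_, m4⟩ ≠ C ⟨_, m5⟩ := C.valid h45
    have e51 : C ⟨_, m5⟩ ≠ C ⟨_, m1⟩ := C.valid h51
    simp only [Ne, Fin.ext_iff] at e12 e23 e34 e45 e51
    have l1 := (C ⟨_, m1⟩).isLt
    have l2 := (C ⟨_, m2⟩).isLt
    have l3 := (C ⟨_, m3⟩).isLt
    have l4 := (C ⟨_, m4⟩).isLt
    have l5 := (C ⟨_, m5⟩).isLt
    omega
  have hle : ((GraphV n).induce S).chromaticNumber ≤ 3 := by
    exact_mod_cast hcol3.chromaticNumber_le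
  have hge : 3 ≤ ((GraphV n).induce S).chromaticNumber := by
    by_contra h
    push_neg at h
    have h2 : ((GraphV n).induce S).chromaticNumber ≤ (2 : ℕ) := by
      exact_mod_cast Order.le_of_lt_add_one (by exact_mod_cast h)
    exact hnot2 (chromaticNumber_le_iff_colorable.mp h2)
  exact ⟨v1 n hn, v2 n hn, v3 n hn, v4 n hn, v5 n hn,
    ⟨rfl, rfl, rfl⟩, ⟨rfl, rfl, rfl⟩, ⟨rfl, rfl, rfl⟩, ⟨rfl, rfl, rfl⟩, ⟨rfl, rfl, rfl⟩,
    ⟨h12, h23, h34, h45, h51⟩, ⟨h13, h14, h24, h25, h35⟩, le_antisymm hle hge⟩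
end

section
/- In any path-decomposition of H_n over host path ℕ, suppose vertices V₁, ..., V_m of H_n have pairwise disjoint intervals appearing in order a₁ < b₁ < a₂ < b₂ < ... < a_m < b_m, vertices V'₂, ..., V'_m have pairwise disjoint intervals in reverse order all to the right of b_m, and vertices Y[i,j] (1 ≤ i < j ≤ m) are each adjacent in H_n to both V_j and V'_j. Then every interval [a_{Y[i,j]}, b_{Y[i,j]}] contains the point b_m, so all vertices Y[i,j] lie in a common bag. -/
open SimpleGraph

/-- In a path-decomposition of `H n` (vertices get integer intervals `[a v, b v]`,
and adjacent vertices get intersecting intervals), if `V 1, ..., V m` have pairwise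
disjoint intervals in increasing order, `V' 2, ..., V' m` have pairwise disjoint
intervals in reverse order all to the right of `b (V m)`, and each `Y i j`
(`1 ≤ i < j ≤ m`) is adjacent to both `V j` and `V' j`, then every interval of a
`Y i j` contains `b (V m)`; in particular all `Y i j` lie in a common bag. -/
theorem stmt17 (n m : ℕ) (hm : 1 ≤ m)
    (a b : Vee n ⊕ Wye n → ℕ)
    (hab : ∀ v, a v ≤ b v)
    (hadj : ∀ u v, (GraphH n).Adj u v →
      ∃ k, a u ≤ k ∧ k ≤ b u ∧ a v ≤ k ∧ k ≤ b v)
    (Vs V' : ℕ → Vee n ⊕ Wye n) (Y : ℕ → ℕ → Vee n ⊕ Wye n)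
    (hord : ∀ j k, 1 ≤ j → j < k → k ≤ m → b (Vs j) < a (Vs k))
    (hright : ∀ j, 2 ≤ j → j ≤ m → b (Vs m) < a (V' j))
    (hordR : ∀ j k, 2 ≤ j → j < k → k ≤ m → b (V' k) < a (V' j))
    (hYadj : ∀ i j, 1 ≤ i → i < j → j ≤ m →
      (GraphH n).Adj (Y i j) (Vs j) ∧ (GraphH n).Adj (Y i j) (V' j)) :
    (∀ i j, 1 ≤ i → i < j → j ≤ m →
      a (Y i j) ≤ b (Vs m) ∧ b (Vs m) ≤ b (Y i j)) ∧
    ∃ k, ∀ i j, 1 ≤ i → i < j → j ≤ m → a (Y i j) ≤ k ∧ k ≤ b (Y i j) := by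
  have key : ∀ i j, 1 ≤ i → i < j → j ≤ m →
      a (Y i j) ≤ b (Vs m) ∧ b (Vs m) ≤ b (Y i j) := by
    intro i j hi hij hjm
    obtain ⟨h1, h2⟩ := hYadj i j hi hij hjm
    obtain ⟨k₁, hk1a, hk1b, hk1c, hk1d⟩ := hadj _ _ h1
    obtain ⟨k₂, hk2a, hk2b, hk2c, hk2d⟩ := hadj _ _ h2
    have hj2 : 2 ≤ j := by omega
    have hbj : b (Vs j) ≤ b (Vs m) := by
      rcases eq_or_lt_of_le hjm with h | h
      · rw [h]
      · exact le_of_lt (lt_of_lt_of_le (hord j m (by omega) h le_rfl) (hab _))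
    constructor
    · exact le_trans hk1a (le_trans hk1d hbj)
    · exact le_trans (le_of_lt (lt_of_lt_of_le (hright j hj2 hjm) hk2c)) hk2b
  exact ⟨key, b (Vs m), fun i j hi hij hjm => key i j hi hij hjm⟩
end

section
/- Milliken's Ramsey theorem for binary trees: for every binary tree Q (a down-set of some complete binary tree), and positive integers p and r with p at least the height of Q, there exists n₀ such that for all n ≥ n₀ and every r-coloring Φ of the strong copies of Q in T_n, there is a color α and a subposet R of T_n which is a strong copy of T_p such that every strong copy of Q contained in R receives color α under Φ. -/
/-- The elements of the complete binary tree `T n`: binary strings of length at most `n`. -/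
def TreeSet (n : ℕ) : Set (List Bool) := {x | x.length ≤ n}

/-- `R` is a strong copy of the binary tree `Q`: there is a bijection `f : Q → R`
which is a poset isomorphism for the prefix order and preserves the left/right
tree relation in both directions. -/
def IsStrongCopy (Q R : Set (List Bool)) : Prop :=
  ∃ f : List Bool → List Bool, Set.BijOn f Q R ∧
    (∀ x ∈ Q, ∀ y ∈ Q, (x <+: y ↔ f x <+: f y)) ∧
    (∀ x ∈ Q, ∀ y ∈ Q, x <+: y → x ≠ y →
      (leftAbove x y ↔ leftAbove (f x) (f y)))

namespace Mll

lemma leftAbove_cons (b : Bool) (x y : List Bool) :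
    leftAbove (b::x) (b::y) ↔ leftAbove x y := by
  constructor
  · rintro ⟨t, ht⟩; exact ⟨t, by simpa using ht⟩
  · rintro ⟨t, ht⟩; exact ⟨t, by simp [ht]⟩

lemma rightAbove_cons (b : Bool) (x y : List Bool) :
    rightAbove (b::x) (b::y) ↔ rightAbove x y := by
  constructor
  · rintro ⟨t, ht⟩; exact ⟨t, by simpa using ht⟩
  · rintro ⟨t, ht⟩; exact ⟨t, by simp [ht]⟩

lemma leftAbove_nil_cons (b : Bool) (t : List Bool) :
    leftAbove [] (b::t) ↔ b = false := by
  constructor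
  · rintro ⟨u, hu⟩; simpa using congrArg (·.head?) hu
  · rintro rfl; exact ⟨t, rfl⟩

lemma rightAbove_nil_cons (b : Bool) (t : List Bool) :
    rightAbove [] (b::t) ↔ b = true := by
  constructor
  · rintro ⟨u, hu⟩; simpa using congrArg (·.head?) hu
  · rintro rfl; exact ⟨t, rfl⟩

lemma leftAbove_pref {x y : List Bool} (h : leftAbove x y) : x <+: y := by
  obtain ⟨t, rfl⟩ := h; exact ⟨_, rfl⟩

lemma rightAbove_pref {x y : List Bool} (h : rightAbove x y) : x <+: y := by
  obtain ⟨t, rfl⟩ := h; exact ⟨_, rfl⟩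

lemma leftAbove_ne {x y : List Bool} (h : leftAbove x y) : x ≠ y := by
  obtain ⟨t, rfl⟩ := h; intro he
  have := congrArg List.length he; simp at this

lemma rightAbove_ne {x y : List Bool} (h : rightAbove x y) : x ≠ y := by
  obtain ⟨t, rfl⟩ := h; intro he
  have := congrArg List.length he; simp at this

lemma not_left_and_right {x y : List Bool} (h : leftAbove x y) (h' : rightAbove x y) : False := by
  obtain ⟨t, rfl⟩ := h; obtain ⟨u, hu⟩ := h'
  have := List.append_cancel_left hu
  simp at this

lemma left_or_right {x y : List Bool} (h : x <+: y) (hne : x ≠ y) :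
    leftAbove x y ∨ rightAbove x y := by
  obtain ⟨u, rfl⟩ := h
  match u with
  | [] => simp at hne
  | false :: t => exact Or.inl ⟨t, rfl⟩
  | true :: t => exact Or.inr ⟨t, rfl⟩

lemma prefix_antisymm {x y : List Bool} (h : x <+: y) (h' : y <+: x) : x = y :=
  h.eq_of_length (le_antisymm h.length_le h'.length_le)

/-- The data of a strong-copy witness. -/
def IsCopyMap (A B : Set (List Bool)) (f : List Bool → List Bool) : Prop :=
  Set.BijOn f A B ∧
    (∀ x ∈ A, ∀ y ∈ A, (x <+: y ↔ f x <+: f y)) ∧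
    (∀ x ∈ A, ∀ y ∈ A, x <+: y → x ≠ y →
      (leftAbove x y ↔ leftAbove (f x) (f y)))

lemma isStrongCopy_iff {A B : Set (List Bool)} :
    IsStrongCopy A B ↔ ∃ f, IsCopyMap A B f := Iff.rfl

lemma IsCopyMap.injOn {A B f} (h : IsCopyMap A B f) : Set.InjOn f A := h.1.injOn

lemma IsCopyMap.image_eq {A B f} (h : IsCopyMap A B f) : f '' A = B := h.1.image_eq

lemma IsCopyMap.rightDir {A B f} (h : IsCopyMap A B f) :
    ∀ x ∈ A, ∀ y ∈ A, x <+: y → x ≠ y → (rightAbove x y ↔ rightAbove (f x) (f y)) := by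
  intro x hx y hy hp hne
  have hfp : f x <+: f y := (h.2.1 x hx y hy).1 hp
  have hfne : f x ≠ f y := fun he => hne (h.injOn hx hy he)
  constructor
  · intro hr
    rcases left_or_right hfp hfne with hl | hr'
    · exact absurd ((h.2.2 x hx y hy hp hne).2 hl) (fun hl' => not_left_and_right hl' hr)
    · exact hr'
  · intro hr
    rcases left_or_right hp hne with hl | hr'
    · exact absurd ((h.2.2 x hx y hy hp hne).1 hl) (fun hl' => not_left_and_right hl' hr)
    · exact hr'

lemma IsCopyMap.comp {A B C f g} (hf : IsCopyMap A B f) (hg : IsCopyMap B C g) :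
    IsCopyMap A C (g ∘ f) := by
  refine ⟨hg.1.comp hf.1, ?_, ?_⟩
  · intro x hx y hy
    exact (hf.2.1 x hx y hy).trans (hg.2.1 _ (hf.1.mapsTo hx) _ (hf.1.mapsTo hy))
  · intro x hx y hy hp hne
    refine (hf.2.2 x hx y hy hp hne).trans
      (hg.2.2 _ (hf.1.mapsTo hx) _ (hf.1.mapsTo hy) ((hf.2.1 x hx y hy).1 hp)
        (fun he => hne (hf.injOn hx hy he)))

lemma IsCopyMap.restrict {A B f} (h : IsCopyMap A B f) {S : Set (List Bool)} (hS : S ⊆ A) :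
    IsCopyMap S (f '' S) f := by
  refine ⟨⟨Set.mapsTo_image f S, h.injOn.mono hS, Set.surjOn_image f S⟩, ?_, ?_⟩
  · intro x hx y hy; exact h.2.1 x (hS hx) y (hS hy)
  · intro x hx y hy; exact h.2.2 x (hS hx) y (hS hy)

lemma IsCopyMap.strongCopy {A B f} (h : IsCopyMap A B f) : IsStrongCopy A B := ⟨f, h⟩

lemma IsCopyMap.image_strongCopy {A B f Q S} (h : IsCopyMap A B f) (hS : S ⊆ A)
    (hQ : IsStrongCopy Q S) : IsStrongCopy Q (f '' S) := by
  obtain ⟨g, hg⟩ := hQ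
  exact ⟨f ∘ g, IsCopyMap.comp hg (h.restrict hS)⟩

lemma IsCopyMap.inv {A B f} (h : IsCopyMap A B f) :
    ∃ g, IsCopyMap B A g ∧ (∀ x ∈ A, g (f x) = x) ∧ (∀ y ∈ B, f (g y) = y) := by
  obtain ⟨g, hgm, hgf, hfg⟩ : ∃ g, Set.MapsTo g B A ∧ (∀ x ∈ A, g (f x) = x) ∧
      (∀ y ∈ B, f (g y) = y) := by
    refine ⟨Function.invFunOn f A, ?_, fun x hx => h.injOn
      (Function.invFunOn_apply_mem hx) hx (Function.invFunOn_apply_eq hx), ?_⟩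
    · intro y hy
      have : ∃ a ∈ A, f a = y := by
        have := h.image_eq ▸ hy
        simpa [Set.mem_image] using this
      exact Function.invFunOn_mem this
    · intro y hy
      have : ∃ a ∈ A, f a = y := by
        have := h.image_eq ▸ hy
        simpa [Set.mem_image] using this
      exact Function.invFunOn_eq this
  have hmem : ∀ y ∈ B, g y ∈ A := hgm
  refine ⟨g, ⟨⟨hgm, ?_, ?_⟩, ?_, ?_⟩, hgf, hfg⟩
  · intro y hy y' hy' he
    have := congrArg f he
    rwa [hfg y hy, hfg y' hy'] at this
  · intro x hx
    exact ⟨f x, h.1.mapsTo hx, hgf x hx⟩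
  · intro y hy y' hy'
    have := h.2.1 (g y) (hmem y hy) (g y') (hmem y' hy')
    rw [hfg y hy, hfg y' hy'] at this
    exact this.symm
  · intro y hy y' hy' hp hne
    have hp' : g y <+: g y' := by
      have := h.2.1 (g y) (hmem y hy) (g y') (hmem y' hy')
      rw [hfg y hy, hfg y' hy'] at this
      exact this.2 hp
    have hne' : g y ≠ g y' := fun he => hne (by rw [← hfg y hy, ← hfg y' hy', he])
    have := h.2.2 (g y) (hmem y hy) (g y') (hmem y' hy') hp' hne'
    rw [hfg y hy, hfg y' hy'] at this
    exact this.symm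

end Mll
namespace Mll

lemma treeSet_zero : TreeSet 0 = {[]} := by
  ext x; simp [TreeSet, List.length_eq_zero_iff]

lemma treeSet_mono {m n : ℕ} (h : m ≤ n) : TreeSet m ⊆ TreeSet n :=
  fun _ hx => le_trans hx h

lemma nil_mem_treeSet (n : ℕ) : [] ∈ TreeSet n := by simp [TreeSet]

lemma copyMap_singleton (v : List Bool) : IsCopyMap (TreeSet 0) {v} (fun _ => v) := by
  rw [treeSet_zero]
  refine ⟨⟨fun x hx => rfl, fun x hx y hy _ => by simp_all, fun x hx => ⟨[], rfl, hx.symm⟩⟩, ?_, ?_⟩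
  · intro x hx y hy; simp_all
  · intro x hx y hy hp hne; simp_all

lemma copyMap_cons (b : Bool) (X : Set (List Bool)) :
    IsCopyMap X ((b :: ·) '' X) (b :: ·) := by
  refine ⟨⟨Set.mapsTo_image _ _, fun x _ y _ h => by simpa using h, Set.surjOn_image _ _⟩, ?_, ?_⟩
  · intro x _ y _; simp [List.cons_prefix_cons]
  · intro x _ y _ _ _; exact (leftAbove_cons b x y).symm

lemma strongCopy_cons_iff (b : Bool) (Q X : Set (List Bool)) :
    IsStrongCopy Q ((b :: ·) '' X) ↔ IsStrongCopy Q X := by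
  constructor
  · intro h
    obtain ⟨g, hg, hgf, hfg⟩ := (copyMap_cons b X).inv
    have := hg.image_strongCopy (Set.Subset.refl _) h
    have himg : g '' ((b :: ·) '' X) = X := by
      ext x; constructor
      · rintro ⟨y, hy, rfl⟩
        obtain ⟨x', hx', rfl⟩ := hy
        rw [hgf x' hx']; exact hx'
      · intro hx; exact ⟨b :: x, ⟨x, hx, rfl⟩, hgf x hx⟩
    rwa [himg] at this
  · intro h
    exact (copyMap_cons b X).image_strongCopy (Set.Subset.refl _) h

/-- `a` is the root of `S`. -/
def Root (a : List Bool) (S : Set (List Bool)) : Prop := a ∈ S ∧ ∀ b ∈ S, a <+: b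

lemma Root.unique {a a' S} (h : Root a S) (h' : Root a' S) : a = a' :=
  prefix_antisymm (h.2 a' h'.1) (h'.2 a h.1)

lemma root_image {A B f S a} (h : IsCopyMap A B f) (hS : S ⊆ A) (ha : Root a S) :
    Root (f a) (f '' S) := by
  refine ⟨⟨a, ha.1, rfl⟩, ?_⟩
  rintro _ ⟨b, hb, rfl⟩
  exact (h.2.1 a (hS ha.1) b (hS hb)).1 (ha.2 b hb)

/-- Gluing two copies of `TreeSet k` above the two successors of `v`. -/
lemma glue {k : ℕ} {v : List Bool} {R₀ R₁ : Set (List Bool)}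
    (h₀ : IsStrongCopy (TreeSet k) R₀) (hl : ∀ x ∈ R₀, leftAbove v x)
    (h₁ : IsStrongCopy (TreeSet k) R₁) (hr : ∀ x ∈ R₁, rightAbove v x) :
    IsStrongCopy (TreeSet (k+1)) ({v} ∪ R₀ ∪ R₁) := by
  obtain ⟨f₀, hf₀⟩ := h₀
  obtain ⟨f₁, hf₁⟩ := h₁
  classical
  refine ⟨fun l => match l with
    | [] => v
    | false :: t => f₀ t
    | true :: t => f₁ t, ?_, ?_, ?_⟩
  · constructor
    · rintro (_ | ⟨b, t⟩) hx
      · exact Or.inl (Or.inl rfl)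
      · have ht : t ∈ TreeSet k := by
          simpa [TreeSet, Nat.succ_le_succ_iff] using hx
        cases b
        · exact Or.inl (Or.inr (hf₀.1.mapsTo ht))
        · exact Or.inr (hf₁.1.mapsTo ht)
    constructor
    · rintro (_ | ⟨b, t⟩) hx (_ | ⟨b', t'⟩) hy he
      · rfl
      · exfalso
        have ht' : t' ∈ TreeSet k := by simpa [TreeSet, Nat.succ_le_succ_iff] using hy
        cases b'
        · exact (leftAbove_ne (hl _ (hf₀.1.mapsTo ht')) he)
        · exact (rightAbove_ne (hr _ (hf₁.1.mapsTo ht')) he)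
      · exfalso
        have ht : t ∈ TreeSet k := by simpa [TreeSet, Nat.succ_le_succ_iff] using hx
        cases b
        · exact (leftAbove_ne (hl _ (hf₀.1.mapsTo ht)) he.symm)
        · exact (rightAbove_ne (hr _ (hf₁.1.mapsTo ht)) he.symm)
      · have ht : t ∈ TreeSet k := by simpa [TreeSet, Nat.succ_le_succ_iff] using hx
        have ht' : t' ∈ TreeSet k := by simpa [TreeSet, Nat.succ_le_succ_iff] using hy
        cases b <;> cases b'
        · rw [hf₀.1.injOn ht ht' he]
        · exfalso
          have h1 := hl _ (hf₀.1.mapsTo ht)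
          have h2 := hr _ (hf₁.1.mapsTo ht')
          simp only at he
          rw [← he] at h2
          exact not_left_and_right h1 h2
        · exfalso
          have h1 := hl _ (hf₀.1.mapsTo ht')
          have h2 := hr _ (hf₁.1.mapsTo ht)
          simp only at he
          rw [← he] at h1
          exact not_left_and_right h1 h2
        · rw [hf₁.1.injOn ht ht' he]
    · rintro y (⟨rfl | hy⟩ | hy)
      · exact ⟨[], by simp [TreeSet], rfl⟩
      · obtain ⟨t, ht, rfl⟩ := hf₀.1.surjOn hy
        exact ⟨false :: t, by simpa [TreeSet, Nat.succ_le_succ_iff] using ht, rfl⟩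
      · obtain ⟨t, ht, rfl⟩ := hf₁.1.surjOn hy
        exact ⟨true :: t, by simpa [TreeSet, Nat.succ_le_succ_iff] using ht, rfl⟩
  · rintro (_ | ⟨b, t⟩) hx (_ | ⟨b', t'⟩) hy
    · simp
    · have ht' : t' ∈ TreeSet k := by simpa [TreeSet, Nat.succ_le_succ_iff] using hy
      simp only [List.nil_prefix, true_iff]
      cases b'
      · exact leftAbove_pref (hl _ (hf₀.1.mapsTo ht'))
      · exact rightAbove_pref (hr _ (hf₁.1.mapsTo ht'))
    · have ht : t ∈ TreeSet k := by simpa [TreeSet, Nat.succ_le_succ_iff] using hx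
      constructor
      · intro h; exact absurd (List.prefix_nil.1 h) (by simp)
      · intro h
        exfalso
        cases b
        · replace h : f₀ t <+: v := h
          obtain ⟨u, hu⟩ := hl _ (hf₀.1.mapsTo ht)
          rw [hu] at h
          have := h.length_le; simp at this
        · replace h : f₁ t <+: v := h
          obtain ⟨u, hu⟩ := hr _ (hf₁.1.mapsTo ht)
          rw [hu] at h
          have := h.length_le; simp at this
    · have ht : t ∈ TreeSet k := by simpa [TreeSet, Nat.succ_le_succ_iff] using hx
      have ht' : t' ∈ TreeSet k := by simpa [TreeSet, Nat.succ_le_succ_iff] using hy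
      cases b <;> cases b'
      · rw [List.cons_prefix_cons]
        simpa using hf₀.2.1 t ht t' ht'
      · rw [List.cons_prefix_cons]
        constructor
        · rintro ⟨h, -⟩; simp at h
        · intro h
          exfalso
          replace h : f₀ t <+: f₁ t' := h
          obtain ⟨u, hu⟩ := hl _ (hf₀.1.mapsTo ht)
          obtain ⟨u', hu'⟩ := hr _ (hf₁.1.mapsTo ht')
          rw [hu, hu'] at h
          have := (List.prefix_append_right_inj (l := v)).1 h
          rw [List.cons_prefix_cons] at this
          simp at this
      · rw [List.cons_prefix_cons]
        constructor
        · rintro ⟨h, -⟩; simp at h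
        · intro h
          exfalso
          replace h : f₁ t <+: f₀ t' := h
          obtain ⟨u, hu⟩ := hr _ (hf₁.1.mapsTo ht)
          obtain ⟨u', hu'⟩ := hl _ (hf₀.1.mapsTo ht')
          rw [hu, hu'] at h
          have := (List.prefix_append_right_inj (l := v)).1 h
          rw [List.cons_prefix_cons] at this
          simp at this
      · rw [List.cons_prefix_cons]
        simpa using hf₁.2.1 t ht t' ht'
  · rintro (_ | ⟨b, t⟩) hx (_ | ⟨b', t'⟩) hy hp hne
    · simp at hne
    · have ht' : t' ∈ TreeSet k := by simpa [TreeSet, Nat.succ_le_succ_iff] using hy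
      cases b'
      · constructor
        · intro _
          exact hl _ (hf₀.1.mapsTo ht')
        · intro _
          exact ⟨t', rfl⟩
      · constructor
        · intro h
          have := (leftAbove_nil_cons true t').1 h
          simp at this
        · intro h
          exact absurd (hr _ (hf₁.1.mapsTo ht'))
            (fun hri => not_left_and_right h hri)
    · exact absurd (List.prefix_nil.1 hp) (by simp)
    · have ht : t ∈ TreeSet k := by simpa [TreeSet, Nat.succ_le_succ_iff] using hx
      have ht' : t' ∈ TreeSet k := by simpa [TreeSet, Nat.succ_le_succ_iff] using hy
      obtain ⟨hbb, hp'⟩ := List.cons_prefix_cons.1 hp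
      subst hbb
      have hne' : t ≠ t' := fun he => hne (by rw [he])
      cases b
      · rw [leftAbove_cons]
        exact hf₀.2.2 t ht t' ht' hp' hne'
      · rw [leftAbove_cons]
        exact hf₁.2.2 t ht t' ht' hp' hne'

lemma copyMap_id (A : Set (List Bool)) : IsCopyMap A A id :=
  ⟨Set.bijOn_id A, fun x _ y _ => Iff.rfl, fun x _ y _ _ _ => Iff.rfl⟩

lemma strongCopy_refl (A : Set (List Bool)) : IsStrongCopy A A := ⟨id, copyMap_id A⟩

lemma strongCopy_empty {S : Set (List Bool)} (h : IsStrongCopy ∅ S) : S = ∅ := by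
  obtain ⟨f, hf, -, -⟩ := h
  have := hf.image_eq
  simpa using this.symm

/-- Decomposition of a copy of `Q` at its root. -/
lemma decomp {Q S : Set (List Bool)} {g : List Bool → List Bool}
    (hQ : [] ∈ Q) (hg : IsCopyMap Q S g) :
    Root (g []) S ∧
    IsStrongCopy {t | false::t ∈ Q} {x ∈ S | leftAbove (g []) x} ∧
    IsStrongCopy {t | true::t ∈ Q} {x ∈ S | rightAbove (g []) x} ∧
    S = {g []} ∪ {x ∈ S | leftAbove (g []) x} ∪ {x ∈ S | rightAbove (g []) x} := by
  have hroot : Root (g []) S := by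
    refine ⟨hg.1.mapsTo hQ, ?_⟩
    intro b hb
    obtain ⟨q, hq, rfl⟩ := hg.1.surjOn hb
    exact (hg.2.1 [] hQ q hq).1 List.nil_prefix
  have hdirL : ∀ t, false::t ∈ Q → leftAbove (g []) (g (false::t)) := by
    intro t ht
    exact (hg.2.2 [] hQ (false::t) ht List.nil_prefix (by simp)).1 ⟨t, rfl⟩
  have hdirR : ∀ t, true::t ∈ Q → rightAbove (g []) (g (true::t)) := by
    intro t ht
    exact (hg.rightDir [] hQ (true::t) ht List.nil_prefix (by simp)).1 ⟨t, rfl⟩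
  refine ⟨hroot, ⟨fun t => g (false::t), ?_, ?_, ?_⟩, ⟨fun t => g (true::t), ?_, ?_, ?_⟩, ?_⟩
  · constructor
    · intro t ht
      exact ⟨hg.1.mapsTo ht, hdirL t ht⟩
    constructor
    · intro t ht t' ht' he
      have := hg.injOn ht ht' he
      simpa using this
    · rintro x ⟨hxS, hxL⟩
      obtain ⟨q, hq, rfl⟩ := hg.1.surjOn hxS
      match q, hq with
      | [], hq => exact absurd hxL (fun h => leftAbove_ne h rfl)
      | true::t, hq =>
          exact absurd hxL (fun h => not_left_and_right h (hdirR t hq))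
      | false::t, hq => exact ⟨t, hq, rfl⟩
  · intro t ht t' ht'
    have := hg.2.1 (false::t) ht (false::t') ht'
    simpa [List.cons_prefix_cons] using this
  · intro t ht t' ht' hp hne
    have := hg.2.2 (false::t) ht (false::t') ht'
      (List.cons_prefix_cons.2 ⟨rfl, hp⟩) (by simpa using hne)
    rw [← this, leftAbove_cons]
  · constructor
    · intro t ht
      exact ⟨hg.1.mapsTo ht, hdirR t ht⟩
    constructor
    · intro t ht t' ht' he
      have := hg.injOn ht ht' he
      simpa using this
    · rintro x ⟨hxS, hxR⟩
      obtain ⟨q, hq, rfl⟩ := hg.1.surjOn hxS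
      match q, hq with
      | [], hq => exact absurd hxR (fun h => rightAbove_ne h rfl)
      | false::t, hq =>
          exact absurd hxR (fun h => not_left_and_right (hdirL t hq) h)
      | true::t, hq => exact ⟨t, hq, rfl⟩
  · intro t ht t' ht'
    have := hg.2.1 (true::t) ht (true::t') ht'
    simpa [List.cons_prefix_cons] using this
  · intro t ht t' ht' hp hne
    have := hg.2.2 (true::t) ht (true::t') ht'
      (List.cons_prefix_cons.2 ⟨rfl, hp⟩) (by simpa using hne)
    rw [← this, leftAbove_cons]
  · apply Set.Subset.antisymm
    · intro x hx
      obtain ⟨q, hq, rfl⟩ := hg.1.surjOn hx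
      match q, hq with
      | [], hq => exact Or.inl (Or.inl rfl)
      | false::t, hq => exact Or.inl (Or.inr ⟨hg.1.mapsTo hq, hdirL t hq⟩)
      | true::t, hq => exact Or.inr ⟨hg.1.mapsTo hq, hdirR t hq⟩
    · rintro x ((rfl | ⟨h, -⟩) | ⟨h, -⟩)
      · exact hroot.1
      · exact h
      · exact h

/-- The tree pigeonhole: a dominating monochromatic subtree for vertex colorings. -/
lemma pigeonhole (κ : Type) [Fintype κ] :
    ∀ (n : ℕ) (a : κ → ℕ) (c : List Bool → κ), (∑ i, a i) ≤ n →
      ∃ i R, R ⊆ TreeSet n ∧ (∀ x ∈ R, c x = i) ∧ IsStrongCopy (TreeSet (a i)) R := by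
  haveI := Classical.decEq κ
  intro n
  induction n with
  | zero =>
      intro a c hsum
      refine ⟨c [], {[]}, ?_, ?_, ?_⟩
      · rintro x rfl; exact (nil_mem_treeSet 0)
      · rintro x rfl; rfl
      · have : a (c []) = 0 := by
          have h1 := Finset.single_le_sum (f := a) (fun i _ => Nat.zero_le _)
            (Finset.mem_univ (c []))
          omega
        rw [this]
        exact (copyMap_singleton []).strongCopy
  | succ n ih =>
      intro a c hsum
      by_cases h0 : a (c []) = 0
      · refine ⟨c [], {[]}, ?_, ?_, ?_⟩
        · rintro x rfl; exact (nil_mem_treeSet _)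
        · rintro x rfl; rfl
        · rw [h0]
          exact (copyMap_singleton []).strongCopy
      · set i₀ := c [] with hi₀
        set a' := Function.update a i₀ (a i₀ - 1) with ha'
        have hsum' : (∑ i, a' i) ≤ n := by
          have h1 : (∑ i, a' i) = (a i₀ - 1) + (∑ i ∈ Finset.univ.erase i₀, a i) := by
            rw [ha', Finset.sum_update_of_mem (Finset.mem_univ i₀),
              Finset.sdiff_singleton_eq_erase]
          have h2 : a i₀ + (∑ i ∈ Finset.univ.erase i₀, a i) = ∑ i, a i :=
            Finset.add_sum_erase _ a (Finset.mem_univ i₀)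
          omega
        obtain ⟨j, R₀, hsub₀, hmono₀, hcopy₀⟩ := ih a' (fun t => c (false::t)) hsum'
        by_cases hj : j = i₀
        · obtain ⟨j', R₁, hsub₁, hmono₁, hcopy₁⟩ := ih a' (fun t => c (true::t)) hsum'
          by_cases hj' : j' = i₀
          · rw [hj] at hmono₀ hcopy₀
            rw [hj'] at hmono₁ hcopy₁
            refine ⟨i₀, {[]} ∪ (false :: ·) '' R₀ ∪ (true :: ·) '' R₁, ?_, ?_, ?_⟩
            · rintro x ((rfl | ⟨t, ht, rfl⟩) | ⟨t, ht, rfl⟩)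
              · exact nil_mem_treeSet _
              · exact Nat.succ_le_succ (hsub₀ ht)
              · exact Nat.succ_le_succ (hsub₁ ht)
            · rintro x ((rfl | ⟨t, ht, rfl⟩) | ⟨t, ht, rfl⟩)
              · rfl
              · exact hmono₀ t ht
              · exact hmono₁ t ht
            · have hav : a i₀ = a' i₀ + 1 := by
                rw [ha', Function.update_self]; omega
              rw [hav]
              refine glue ?_ ?_ ?_ ?_
              · exact (copyMap_cons false R₀).image_strongCopy (Set.Subset.refl _) hcopy₀
              · rintro x ⟨t, ht, rfl⟩; exact ⟨t, rfl⟩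
              · exact (copyMap_cons true R₁).image_strongCopy (Set.Subset.refl _) hcopy₁
              · rintro x ⟨t, ht, rfl⟩; exact ⟨t, rfl⟩
          · refine ⟨j', (true :: ·) '' R₁, ?_, ?_, ?_⟩
            · rintro x ⟨t, ht, rfl⟩; exact Nat.succ_le_succ (hsub₁ ht)
            · rintro x ⟨t, ht, rfl⟩; exact hmono₁ t ht
            · have : a' j' = a j' := Function.update_of_ne hj' _ _
              rw [← this]
              exact (copyMap_cons true R₁).image_strongCopy (Set.Subset.refl _) hcopy₁
        · refine ⟨j, (false :: ·) '' R₀, ?_, ?_, ?_⟩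
          · rintro x ⟨t, ht, rfl⟩; exact Nat.succ_le_succ (hsub₀ ht)
          · rintro x ⟨t, ht, rfl⟩; exact hmono₀ t ht
          · have : a' j = a j := Function.update_of_ne hj _ _
            rw [← this]
            exact (copyMap_cons false R₀).image_strongCopy (Set.Subset.refl _) hcopy₀

/-- The Milliken property of a tree `Q`. -/
def Mil (Q : Set (List Bool)) : Prop :=
  ∀ (κ : Type) [Fintype κ] (p : ℕ), ∃ n₀ : ℕ, ∀ n, n₀ ≤ n → ∀ Φ : Set (List Bool) → κ,
    ∃ (α : κ) (R : Set (List Bool)), R ⊆ TreeSet n ∧ IsStrongCopy (TreeSet p) R ∧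
      ∀ S ⊆ R, IsStrongCopy Q S → Φ S = α

lemma mil_empty : Mil ∅ := by
  intro κ _ p
  refine ⟨p, fun n hn Φ => ⟨Φ ∅, TreeSet p, treeSet_mono hn, strongCopy_refl _, ?_⟩⟩
  intro S _ hS
  rw [strongCopy_empty hS]

lemma treeSet_finite (n : ℕ) : (TreeSet n).Finite := List.finite_length_le Bool n

/-- Product stabilization: from the Milliken property of `Q₀` and `Q₁`,
colorings of pairs of copies can be stabilized. -/
lemma product {Q₀ Q₁ : Set (List Bool)} (h₀ : Mil Q₀) (h₁ : Mil Q₁)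
    (κ : Type) [Fintype κ] (m : ℕ) :
    ∃ N : ℕ, ∀ Ψ : Set (List Bool) → Set (List Bool) → κ,
      ∃ (γ : κ) (W₀ W₁ : Set (List Bool)), W₀ ⊆ TreeSet N ∧ W₁ ⊆ TreeSet N ∧
        IsStrongCopy (TreeSet m) W₀ ∧ IsStrongCopy (TreeSet m) W₁ ∧
        ∀ S₀ ⊆ W₀, IsStrongCopy Q₀ S₀ → ∀ S₁ ⊆ W₁, IsStrongCopy Q₁ S₁ →
          Ψ S₀ S₁ = γ := by
  classical
  obtain ⟨n₀, hn₀⟩ := h₀ κ m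
  haveI : Fintype ↥{S : Set (List Bool) | S ⊆ TreeSet n₀} :=
    (Set.Finite.finite_subsets (treeSet_finite n₀)).fintype
  obtain ⟨n₁, hn₁⟩ := h₁ (↥{S : Set (List Bool) | S ⊆ TreeSet n₀} → κ) m
  refine ⟨max n₀ n₁, fun Ψ => ?_⟩
  obtain ⟨α₁, W₁, hW₁sub, hW₁copy, hW₁mono⟩ :=
    hn₁ n₁ le_rfl (fun S₁ => fun S₀ => Ψ S₀.1 S₁)
  obtain ⟨α, W₀, hW₀sub, hW₀copy, hW₀mono⟩ :=
    hn₀ n₀ le_rfl (fun S₀ => if h : S₀ ⊆ TreeSet n₀ then α₁ ⟨S₀, h⟩ else α₁ ⟨∅, by simp⟩)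
  refine ⟨α, W₀, W₁, hW₀sub.trans (treeSet_mono (le_max_left _ _)),
    hW₁sub.trans (treeSet_mono (le_max_right _ _)), hW₀copy, hW₁copy, ?_⟩
  intro S₀ hS₀ hS₀copy S₁ hS₁ hS₁copy
  have hS₀T : S₀ ⊆ TreeSet n₀ := hS₀.trans hW₀sub
  have e1 : Ψ S₀ S₁ = α₁ ⟨S₀, hS₀T⟩ := congrFun (hW₁mono S₁ hS₁ hS₁copy) ⟨S₀, hS₀T⟩
  have e2 := hW₀mono S₀ hS₀ hS₀copy
  rw [dif_pos hS₀T] at e2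
  rw [e1, e2]

/-- image of image under a two-sided inverse -/
lemma image_image_inv {f g : List Bool → List Bool} {B S : Set (List Bool)}
    (hS : S ⊆ B) (hfg : ∀ y ∈ B, f (g y) = y) : f '' (g '' S) = S := by
  ext x; constructor
  · rintro ⟨y, ⟨s, hs, rfl⟩, rfl⟩
    rw [hfg s (hS hs)]; exact hs
  · intro hx
    exact ⟨g x, ⟨x, hx, rfl⟩, hfg x (hS hx)⟩

/-- Fusion: a big copy of `TreeSet P` on which the color of a copy of `Q`
depends only on its root. -/
lemma fusion {Q : Set (List Bool)} (hQnil : [] ∈ Q)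
    (h₀ : Mil {t | false::t ∈ Q}) (h₁ : Mil {t | true::t ∈ Q})
    (κ : Type) [Fintype κ] (P : ℕ) :
    ∃ N : ℕ, ∀ Φ : Set (List Bool) → κ,
      ∃ R' : Set (List Bool), R' ⊆ TreeSet N ∧ IsStrongCopy (TreeSet P) R' ∧
        ∀ a S S', S ⊆ R' → S' ⊆ R' → IsStrongCopy Q S → IsStrongCopy Q S' →
          Root a S → Root a S' → Φ S = Φ S' := by
  induction P with
  | zero =>
      refine ⟨0, fun Φ => ⟨{[]}, ?_, ?_, ?_⟩⟩
      · rintro x rfl; exact nil_mem_treeSet 0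
      · exact (copyMap_singleton []).strongCopy
      · intro a S S' hS hS' _ _ hr hr'
        have h1 : S = {[]} := (Set.Nonempty.subset_singleton_iff ⟨a, hr.1⟩).1 hS
        have h2 : S' = {[]} := (Set.Nonempty.subset_singleton_iff ⟨a, hr'.1⟩).1 hS'
        rw [h1, h2]
  | succ P ihP =>
      obtain ⟨N', hN'⟩ := ihP
      obtain ⟨NPL, hNPL⟩ := product h₀ h₁ κ N'
      refine ⟨NPL + 1, fun Φ => ?_⟩
      obtain ⟨γ, W₀, W₁, hW₀sub, hW₁sub, hW₀copy, hW₁copy, hstab⟩ :=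
        hNPL (fun S₀ S₁ => Φ ({[]} ∪ (false :: ·) '' S₀ ∪ (true :: ·) '' S₁))
      obtain ⟨w₀, hw₀⟩ := hW₀copy
      obtain ⟨w₁, hw₁⟩ := hW₁copy
      have h₀map : IsCopyMap (TreeSet N') ((false :: ·) '' W₀) ((false :: ·) ∘ w₀) :=
        IsCopyMap.comp hw₀ (copyMap_cons false W₀)
      have h₁map : IsCopyMap (TreeSet N') ((true :: ·) '' W₁) ((true :: ·) ∘ w₁) :=
        IsCopyMap.comp hw₁ (copyMap_cons true W₁)
      obtain ⟨R₀'', hR₀sub, hR₀copy, hR₀prop⟩ := hN' (fun S => Φ (((false :: ·) ∘ w₀) '' S))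
      obtain ⟨R₁'', hR₁sub, hR₁copy, hR₁prop⟩ := hN' (fun S => Φ (((true :: ·) ∘ w₁) '' S))
      set R₀' := ((false :: ·) ∘ w₀) '' R₀'' with hR₀'def
      set R₁' := ((true :: ·) ∘ w₁) '' R₁'' with hR₁'def
      have hR₀'shape : ∀ x ∈ R₀', ∃ t, t ∈ W₀ ∧ x = false :: t := by
        rintro x ⟨y, hy, rfl⟩
        exact ⟨w₀ y, hw₀.1.mapsTo (hR₀sub hy), rfl⟩
      have hR₁'shape : ∀ x ∈ R₁', ∃ t, t ∈ W₁ ∧ x = true :: t := by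
        rintro x ⟨y, hy, rfl⟩
        exact ⟨w₁ y, hw₁.1.mapsTo (hR₁sub hy), rfl⟩
      refine ⟨{[]} ∪ R₀' ∪ R₁', ?_, ?_, ?_⟩
      · rintro x ((rfl | hx) | hx)
        · exact nil_mem_treeSet _
        · obtain ⟨t, htW, rfl⟩ := hR₀'shape x hx
          exact Nat.succ_le_succ (hW₀sub htW)
        · obtain ⟨t, htW, rfl⟩ := hR₁'shape x hx
          exact Nat.succ_le_succ (hW₁sub htW)
      · refine glue ?_ ?_ ?_ ?_
        · exact h₀map.image_strongCopy hR₀sub hR₀copy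
        · intro x hx
          obtain ⟨t, -, rfl⟩ := hR₀'shape x hx
          exact ⟨t, rfl⟩
        · exact h₁map.image_strongCopy hR₁sub hR₁copy
        · intro x hx
          obtain ⟨t, -, rfl⟩ := hR₁'shape x hx
          exact ⟨t, rfl⟩
      · intro a S S' hS hS' hScopy hS'copy hroot hroot'
        -- helper: color of any copy of Q inside R' with root [] is γ
        have key : ∀ T, T ⊆ {[]} ∪ R₀' ∪ R₁' → IsStrongCopy Q T → Root [] T → Φ T = γ := by
          intro T hT hTcopy hTroot
          obtain ⟨gT, hgT⟩ := hTcopy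
          obtain ⟨hgroot, hLcopy, hRcopy, hTeq⟩ := decomp hQnil hgT
          have hg0 : gT [] = [] := hgroot.unique hTroot
          rw [hg0] at hLcopy hRcopy hTeq
          set L := {x ∈ T | leftAbove [] x} with hLdef
          set Rt := {x ∈ T | rightAbove [] x} with hRdef
          have hLshape : ∀ x ∈ L, ∃ t, x = false :: t ∧ false :: t ∈ T := by
            rintro x ⟨hxT, u, rfl⟩
            exact ⟨u, rfl, by simpa using hxT⟩
          have hRshape : ∀ x ∈ Rt, ∃ t, x = true :: t ∧ true :: t ∈ T := by
            rintro x ⟨hxT, u, rfl⟩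
            exact ⟨u, rfl, by simpa using hxT⟩
          set A₀ := {t | false :: t ∈ L} with hA₀def
          set A₁ := {t | true :: t ∈ Rt} with hA₁def
          have hLA : (false :: ·) '' A₀ = L := by
            apply Set.Subset.antisymm
            · rintro x ⟨t, ht, rfl⟩; exact ht
            · intro x hx
              obtain ⟨t, rfl, htT⟩ := hLshape x hx
              exact ⟨t, hx, rfl⟩
          have hRA : (true :: ·) '' A₁ = Rt := by
            apply Set.Subset.antisymm
            · rintro x ⟨t, ht, rfl⟩; exact ht
            · intro x hx
              obtain ⟨t, rfl, htT⟩ := hRshape x hx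
              exact ⟨t, hx, rfl⟩
          have hA₀W : A₀ ⊆ W₀ := by
            intro t ht
            have hmem : (false :: t) ∈ {[]} ∪ R₀' ∪ R₁' := hT ht.1
            rcases hmem with ((he | hx) | hx)
            · exact absurd he (by simp)
            · obtain ⟨u, huW, hue⟩ := hR₀'shape _ hx
              have : t = u := by injection hue
              rwa [this]
            · obtain ⟨u, huW, hue⟩ := hR₁'shape _ hx
              exact absurd hue (by simp)
          have hA₁W : A₁ ⊆ W₁ := by
            intro t ht
            have hmem : (true :: t) ∈ {[]} ∪ R₀' ∪ R₁' := hT ht.1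
            rcases hmem with ((he | hx) | hx)
            · exact absurd he (by simp)
            · obtain ⟨u, huW, hue⟩ := hR₀'shape _ hx
              exact absurd hue (by simp)
            · obtain ⟨u, huW, hue⟩ := hR₁'shape _ hx
              have : t = u := by injection hue
              rwa [this]
          have hA₀copy : IsStrongCopy {t | false::t ∈ Q} A₀ := by
            rw [← strongCopy_cons_iff false, hLA]; exact hLcopy
          have hA₁copy : IsStrongCopy {t | true::t ∈ Q} A₁ := by
            rw [← strongCopy_cons_iff true, hRA]; exact hRcopy
          have hTeq' : T = {[]} ∪ (false :: ·) '' A₀ ∪ (true :: ·) '' A₁ := by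
            rw [hLA, hRA]; exact hTeq
          calc Φ T = Φ ({[]} ∪ (false :: ·) '' A₀ ∪ (true :: ·) '' A₁) := by rw [← hTeq']
            _ = γ := hstab A₀ hA₀W hA₀copy A₁ hA₁W hA₁copy
        -- helper for copies inside a side
        have sidekey : ∀ (b : Bool) (w : List Bool → List Bool) (W Rb'' : Set (List Bool)),
            IsCopyMap (TreeSet N') ((b :: ·) '' W) ((b :: ·) ∘ w) →
            Rb'' ⊆ TreeSet N' →
            (∀ T T', T ⊆ Rb'' → T' ⊆ Rb'' → IsStrongCopy Q T → IsStrongCopy Q T' →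
              ∀ a', Root a' T → Root a' T' → Φ (((b :: ·) ∘ w) '' T) = Φ (((b :: ·) ∘ w) '' T')) →
            S ⊆ ((b :: ·) ∘ w) '' Rb'' → S' ⊆ ((b :: ·) ∘ w) '' Rb'' →
            Φ S = Φ S' := by
          intro b w W Rb'' hmap hRbsub hprop hSsub hS'sub
          obtain ⟨g, hgmap, hgf, hfg⟩ := hmap.inv
          have hBsub : ((b :: ·) ∘ w) '' Rb'' ⊆ (b :: ·) '' W := by
            rw [← hmap.image_eq]
            exact Set.image_mono hRbsub
          have hSB : S ⊆ (b :: ·) '' W := hSsub.trans hBsub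
          have hS'B : S' ⊆ (b :: ·) '' W := hS'sub.trans hBsub
          have hgS : g '' S ⊆ Rb'' := by
            intro x hx
            obtain ⟨s, hs, rfl⟩ := hx
            obtain ⟨y, hy, rfl⟩ := hSsub hs
            rw [hgf y (hRbsub hy)]
            exact hy
          have hgS' : g '' S' ⊆ Rb'' := by
            intro x hx
            obtain ⟨s, hs, rfl⟩ := hx
            obtain ⟨y, hy, rfl⟩ := hS'sub hs
            rw [hgf y (hRbsub hy)]
            exact hy
          have e1 : ((b :: ·) ∘ w) '' (g '' S) = S := image_image_inv hSB hfg
          have e2 : ((b :: ·) ∘ w) '' (g '' S') = S' := image_image_inv hS'B hfg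
          have hr1 : Root (g a) (g '' S) := root_image hgmap hSB hroot
          have hr2 : Root (g a) (g '' S') := root_image hgmap hS'B hroot'
          have := hprop (g '' S) (g '' S') hgS hgS'
            (hgmap.image_strongCopy hSB hScopy) (hgmap.image_strongCopy hS'B hS'copy)
            (g a) hr1 hr2
          rwa [e1, e2] at this
        have haR' : a ∈ {[]} ∪ R₀' ∪ R₁' := hS hroot.1
        rcases haR' with (ha | haR₀) | haR₁
        · have ha' : a = [] := ha
          subst ha'
          rw [key S hS hScopy hroot, key S' hS' hS'copy hroot']
        · obtain ⟨ta, htaW, hae⟩ := hR₀'shape a haR₀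
          have hside : ∀ T, T ⊆ {[]} ∪ R₀' ∪ R₁' → Root a T → T ⊆ R₀' := by
            intro T hT hrt bb hbb
            have hpre : a <+: bb := hrt.2 bb hbb
            rcases hT hbb with (hb | hb) | hb
            · exfalso
              have hbnil : bb = [] := hb
              rw [hbnil, List.prefix_nil] at hpre
              rw [hpre] at hae
              simp at hae
            · exact hb
            · exfalso
              obtain ⟨tb, htbW, hbe⟩ := hR₁'shape bb hb
              rw [hae, hbe, List.cons_prefix_cons] at hpre
              simp at hpre
          exact sidekey false w₀ W₀ R₀'' h₀map hR₀sub
            (fun T T' hT hT' hc hc' a' h1 h2 => hR₀prop a' T T' hT hT' hc hc' h1 h2)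
            (hside S hS hroot) (hside S' hS' hroot')
        · obtain ⟨ta, htaW, hae⟩ := hR₁'shape a haR₁
          have hside : ∀ T, T ⊆ {[]} ∪ R₀' ∪ R₁' → Root a T → T ⊆ R₁' := by
            intro T hT hrt bb hbb
            have hpre : a <+: bb := hrt.2 bb hbb
            rcases hT hbb with (hb | hb) | hb
            · exfalso
              have hbnil : bb = [] := hb
              rw [hbnil, List.prefix_nil] at hpre
              rw [hpre] at hae
              simp at hae
            · exfalso
              obtain ⟨tb, htbW, hbe⟩ := hR₀'shape bb hb
              rw [hae, hbe, List.cons_prefix_cons] at hpre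
              simp at hpre
            · exact hb
          exact sidekey true w₁ W₁ R₁'' h₁map hR₁sub
            (fun T T' hT hT' hc hc' a' h1 h2 => hR₁prop a' T T' hT hT' hc hc' h1 h2)
            (hside S hS hroot) (hside S' hS' hroot')

/-- Every finite down-closed binary tree has the Milliken property. -/
lemma mil_all : ∀ (k : ℕ) (Q : Set (List Bool)), Q.Finite →
    (∀ y ∈ Q, ∀ x : List Bool, x <+: y → x ∈ Q) → Q.ncard ≤ k → Mil Q := by
  intro k
  induction k with
  | zero =>
      intro Q hfin hdown hcard
      have hQ : Q = ∅ := (Set.ncard_eq_zero hfin).1 (Nat.le_zero.1 hcard)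
      rw [hQ]; exact mil_empty
  | succ k ih =>
      intro Q hfin hdown hcard
      by_cases hne : Q = ∅
      · rw [hne]; exact mil_empty
      have hQne : Q.Nonempty := Set.nonempty_iff_ne_empty.2 hne
      obtain ⟨y, hy⟩ := hQne
      have hnil : [] ∈ Q := hdown y hy [] List.nil_prefix
      have hconsinj : ∀ b : Bool, Function.Injective (fun t : List Bool => b :: t) := by
        intro b t t' h; injection h
      have hQb : ∀ b : Bool, Mil {t | b::t ∈ Q} := by
        intro b
        have hfin' : {t | b::t ∈ Q}.Finite :=
          Set.Finite.preimage ((hconsinj b).injOn) hfin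
        have hdown' : ∀ y' ∈ {t | b::t ∈ Q}, ∀ x, x <+: y' → x ∈ {t | b::t ∈ Q} := by
          intro y' hy' x hx
          exact hdown (b::y') hy' (b::x) (List.cons_prefix_cons.2 ⟨rfl, hx⟩)
        have hcard' : {t | b::t ∈ Q}.ncard ≤ k := by
          have h1 : ((b :: ·) '' {t | b::t ∈ Q}).ncard = {t | b::t ∈ Q}.ncard :=
            Set.ncard_image_of_injective _ (hconsinj b)
          have h2 : (b :: ·) '' {t | b::t ∈ Q} ⊆ Q \ {[]} := by
            rintro x ⟨t, ht, rfl⟩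
            exact ⟨ht, by simp⟩
          have h3 : (Q \ {[]}).ncard = Q.ncard - 1 :=
            Set.ncard_diff_singleton_of_mem hnil
          have h4 : ((b :: ·) '' {t | b::t ∈ Q}).ncard ≤ (Q \ {[]}).ncard :=
            Set.ncard_le_ncard h2 hfin.diff
          have h5 : 0 < Q.ncard := (Set.ncard_pos hfin).2 ⟨[], hnil⟩
          omega
        exact ih _ hfin' hdown' hcard'
      intro κ _ p
      classical
      obtain ⟨N, hN⟩ := fusion hnil (hQb false) (hQb true) κ (Fintype.card κ * p)
      refine ⟨N, fun n hn Φ => ?_⟩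
      obtain ⟨R', hR'sub, hR'copy, hR'prop⟩ := hN Φ
      obtain ⟨G, hG⟩ := hR'copy
      have hsum : (∑ _i : κ, p) ≤ Fintype.card κ * p := by
        simp [Finset.sum_const, mul_comm]
      obtain ⟨i, U, hUsub, hUmono, hUcopy⟩ := pigeonhole κ (Fintype.card κ * p) (fun _ => p)
        (fun x => if h : ∃ T, T ⊆ R' ∧ IsStrongCopy Q T ∧ Root (G x) T then Φ h.choose else Φ ∅)
        hsum
      refine ⟨i, G '' U, ?_, IsCopyMap.image_strongCopy hG hUsub hUcopy, ?_⟩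
      · intro x hx
        obtain ⟨u, hu, rfl⟩ := hx
        exact treeSet_mono hn (hR'sub (hG.1.mapsTo (hUsub hu)))
      · intro S hSR hScopy
        obtain ⟨gS, hgS⟩ := hScopy
        have hroot : Root (gS []) S := (decomp hnil hgS).1
        have hSR' : S ⊆ R' := by
          intro s hs
          obtain ⟨u, hu, rfl⟩ := hSR hs
          exact hG.1.mapsTo (hUsub hu)
        obtain ⟨x, hxU, hxe⟩ := hSR hroot.1
        have hrootx : Root (G x) S := by rw [hxe]; exact hroot
        have hex : ∃ T, T ⊆ R' ∧ IsStrongCopy Q T ∧ Root (G x) T :=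
          ⟨S, hSR', ⟨gS, hgS⟩, hrootx⟩
        have hc := hUmono x hxU
        rw [dif_pos hex] at hc
        have hspec := hex.choose_spec
        have hfin2 := hR'prop (G x) S hex.choose hSR' hspec.1 ⟨gS, hgS⟩ hspec.2.1
          hrootx hspec.2.2
        rw [hfin2, hc]

end Mll

/-- Milliken's Ramsey theorem for binary trees: for every finite down-closed
binary tree `Q` of height at most `p` and every number `r` of colors, there is
`n₀` such that for every `n ≥ n₀` and every `r`-coloring of the strong copies of
`Q` in `T n`, there is a strong copy `R` of `T p` inside `T n` all of whose
strong copies of `Q` get the same color. -/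
theorem stmt18 (Q : Set (List Bool)) (hQne : Q.Nonempty) (hQfin : Q.Finite)
    (hQdown : ∀ y ∈ Q, ∀ x : List Bool, x <+: y → x ∈ Q)
    (p r : ℕ) (hp : 1 ≤ p) (hr : 1 ≤ r)
    (hheight : ∀ x ∈ Q, x.length < p) :
    ∃ n₀ : ℕ, ∀ n, n₀ ≤ n → ∀ Φ : Set (List Bool) → Fin r,
      ∃ (α : Fin r) (R : Set (List Bool)), R ⊆ TreeSet n ∧
        IsStrongCopy (TreeSet p) R ∧
        ∀ S ⊆ R, IsStrongCopy Q S → Φ S = α := by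
  obtain ⟨n₀, hn₀⟩ := Mll.mil_all Q.ncard Q hQfin hQdown le_rfl (Fin r) p
  exact ⟨n₀, hn₀⟩
end

section
/- For every n ≥ 1, the graph G_n of V's in the complete binary tree T_n has chromatic number at least ⌈log₂ n⌉, since G_n contains the shift graph S_n as a subgraph; consequently χ(G_n) → ∞ as n → ∞ while ω(G_n) ≤ 2. -/
open SimpleGraph

namespace Stmt19Aux

/-- The string of `i - 1` ones. -/
def cstr (i : ℕ) : List Bool := List.replicate (i - 1) true

/-- The V associated to the pair `[i, j]`. -/
def Vmk (n i j : ℕ) (h1 : 1 ≤ i) (h2 : i < j) (h3 : j ≤ n) : Vee n where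
  x := cstr i
  y := cstr i ++ [false]
  z := cstr j
  hx := by simp [cstr]; omega
  hy := by simp [cstr]; omega
  hz := by simp [cstr]; omega
  hxy := ⟨[], rfl⟩
  hxz := ⟨List.replicate (j - i - 1) true, by
    show List.replicate (j - 1) true = List.replicate (i - 1) true ++ _
    rw [show j - 1 = (i - 1) + (j - i) by omega, List.replicate_add]
    congr 1
    rw [show j - i = (j - i - 1) + 1 by omega, List.replicate_succ]
    simp⟩

lemma below_len {n : ℕ} {A B : Vee n} (h : A.z = B.x ∨ A.y = B.x) :
    A.x.length < B.x.length := by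
  obtain ⟨t, ht⟩ := A.hxz
  obtain ⟨s, hs⟩ := A.hxy
  rcases h with h | h
  · rw [← h, ht]; simp
  · rw [← h, hs]; simp

lemma chainFalse {n : ℕ} {A B C : Vee n} (hab : A.z = B.x ∨ A.y = B.x)
    (hbc : B.z = C.x ∨ B.y = C.x) (hac : A.z = C.x ∨ A.y = C.x) : False := by
  obtain ⟨ta, hya⟩ := A.hxy
  obtain ⟨sa, hza⟩ := A.hxz
  obtain ⟨tb, hyb⟩ := B.hxy
  obtain ⟨sb, hzb⟩ := B.hxz
  have hB : ∃ (b : Bool) (w : List Bool), B.x = A.x ++ b :: w := by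
    rcases hab with h | h
    · exact ⟨true, sa, by rw [← h, hza]⟩
    · exact ⟨false, ta, by rw [← h, hya]⟩
  have hC1 : ∃ (b : Bool) (w : List Bool), C.x = B.x ++ b :: w := by
    rcases hbc with h | h
    · exact ⟨true, sb, by rw [← h, hzb]⟩
    · exact ⟨false, tb, by rw [← h, hyb]⟩
  obtain ⟨b2, w2, hC1⟩ := hC1
  clear hB
  rcases hab with h' | h' <;> rcases hac with h | h
  · rw [← h', ← h] at hC1
    have := congrArg List.length hC1
    simp at this
  · rw [← h', ← h] at hC1
    rw [hya, hza] at hC1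
    simp [List.append_assoc] at hC1
  · rw [← h', ← h] at hC1
    rw [hya, hza] at hC1
    simp [List.append_assoc] at hC1
  · rw [← h', ← h] at hC1
    have := congrArg List.length hC1
    simp at this

lemma trifree (n : ℕ) : (GraphV n).CliqueFree 3 := by
  classical
  intro s hs
  obtain ⟨a, b, c, hab, hac, hbc, rfl⟩ := Finset.card_eq_three.mp hs.card_eq
  have h1 : (GraphV n).Adj a b := hs.1 (by simp) (by simp) hab
  have h2 : (GraphV n).Adj a c := hs.1 (by simp) (by simp) hac
  have h3 : (GraphV n).Adj b c := hs.1 (by simp) (by simp) hbc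
  rw [GraphV, SimpleGraph.fromRel_adj] at h1 h2 h3
  obtain ⟨-, h1⟩ := h1
  obtain ⟨-, h2⟩ := h2
  obtain ⟨-, h3⟩ := h3
  rcases h1 with h1 | h1 <;> rcases h2 with h2 | h2 <;> rcases h3 with h3 | h3 <;>
    first
      | exact chainFalse h1 h3 h2
      | exact chainFalse h2 h3 h1
      | exact chainFalse h2 h1 h3
      | exact chainFalse h1 h2 h3
      | exact chainFalse h3 h2 h1
      | exact chainFalse h3 h1 h2
      | (have l1 := below_len h1; have l2 := below_len h2; have l3 := below_len h3; omega)

lemma Vmk_adj (n a b c : ℕ) (h1 : 1 ≤ a) (h2 : a < b) (h3 : b ≤ n)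
    (h2' : b < c) (h3' : c ≤ n) :
    (GraphV n).Adj (Vmk n a b h1 h2 h3) (Vmk n b c (by omega) h2' h3') := by
  rw [GraphV, SimpleGraph.fromRel_adj]
  refine ⟨fun h => ?_, Or.inl (Or.inl rfl)⟩
  have := congrArg (fun V => (Vee.x V).length) h
  simp [Vmk, cstr] at this
  omega

lemma shift_bound (n m : ℕ) (C : (GraphV n).Coloring (Fin m)) : n ≤ 2 ^ m := by
  classical
  set F : Fin n → Finset (Fin m) := fun i =>
    (Finset.Ioc (i.val + 1) n).attach.image
      (fun j => C (Vmk n (i.val + 1) j.1 (by omega) (Finset.mem_Ioc.mp j.2).1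
        (Finset.mem_Ioc.mp j.2).2)) with hF
  have key : ∀ i i' : Fin n, i.val < i'.val → F i ≠ F i' := by
    intro i i' hlt heq
    have h2 : i.val + 1 < i'.val + 1 := by omega
    have h3 : i'.val + 1 ≤ n := i'.isLt
    have hmem : C (Vmk n (i.val + 1) (i'.val + 1) (by omega) h2 h3) ∈ F i := by
      rw [hF]
      exact Finset.mem_image.mpr
        ⟨⟨i'.val + 1, Finset.mem_Ioc.mpr ⟨h2, h3⟩⟩, Finset.mem_attach _ _, rfl⟩
    rw [heq, hF] at hmem
    obtain ⟨j, -, hj⟩ := Finset.mem_image.mp hmem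
    exact C.valid (Vmk_adj n (i.val + 1) (i'.val + 1) j.1 (by omega) h2 h3
      (Finset.mem_Ioc.mp j.2).1 (Finset.mem_Ioc.mp j.2).2) hj.symm
  have hinj : Function.Injective F := by
    intro i i' h
    by_contra hne
    rcases Nat.lt_or_ge i.val i'.val with hlt | hge
    · exact key i i' hlt h
    · have : i'.val < i.val := by
        rcases Nat.lt_or_ge i'.val i.val with h' | h'
        · exact h'
        · exact absurd (Fin.ext (by omega)) hne
      exact key i' i this h.symm
  calc n = Fintype.card (Fin n) := (Fintype.card_fin n).symm
    _ ≤ Fintype.card (Finset (Fin m)) := Fintype.card_le_of_injective F hinj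
    _ = 2 ^ m := by simp [Fintype.card_finset]

lemma chrom_bound (n : ℕ) : (Nat.clog 2 n : ℕ∞) ≤ (GraphV n).chromaticNumber := by
  rw [SimpleGraph.chromaticNumber]
  refine le_iInf₂ fun m hm => ?_
  obtain ⟨C⟩ := hm
  exact_mod_cast Nat.cast_le.mpr
    ((Nat.clog_le_iff_le_pow (by norm_num)).mpr (shift_bound n m C))

lemma cstr_inj {a b : ℕ} (ha : 1 ≤ a) (hb : 1 ≤ b) (h : cstr a = cstr b) : a = b := by
  have := congrArg List.length h
  simp [cstr] at this
  omega

end Stmt19Aux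

/-- `G n` contains the shift graph `S n` as a subgraph, hence
`χ(G n) ≥ ⌈log₂ n⌉`; consequently `χ(G n) → ∞`, while `G n` is triangle-free. -/
theorem stmt19 :
    (∀ n : ℕ, 1 ≤ n →
      (∃ f : ShiftVert n → Vee n, Function.Injective f ∧
        ∀ u v, (ShiftGraph n).Adj u v → (GraphV n).Adj (f u) (f v)) ∧
      (Nat.clog 2 n : ℕ∞) ≤ (GraphV n).chromaticNumber ∧
      (GraphV n).CliqueFree 3) ∧
    (∀ k : ℕ, ∃ n₀ : ℕ, ∀ n, n₀ ≤ n → (k : ℕ∞) < (GraphV n).chromaticNumber) := by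
  open Stmt19Aux in
  constructor
  · intro n hn
    refine ⟨⟨fun u => Vmk n u.1.1 u.1.2 u.2.1 u.2.2.1 u.2.2.2, ?_, ?_⟩,
      chrom_bound n, trifree n⟩
    · intro u v h
      have hx := congrArg Vee.x h
      have hz := congrArg Vee.z h
      simp only [Vmk] at hx hz
      have e1 : u.1.1 = v.1.1 := cstr_inj u.2.1 v.2.1 hx
      have e2 : u.1.2 = v.1.2 :=
        cstr_inj (by have := u.2.2.1; have := u.2.1; omega)
          (by have := v.2.2.1; have := v.2.1; omega) hz
      exact Subtype.ext (Prod.ext e1 e2)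
    · intro u v huv
      rw [ShiftGraph, SimpleGraph.fromRel_adj] at huv
      obtain ⟨hne, hrel⟩ := huv
      rw [GraphV, SimpleGraph.fromRel_adj]
      constructor
      · intro h
        apply hne
        have hx := congrArg Vee.x h
        have hz := congrArg Vee.z h
        simp only [Vmk] at hx hz
        exact Subtype.ext (Prod.ext (cstr_inj u.2.1 v.2.1 hx)
          (cstr_inj (by have := u.2.2.1; have := u.2.1; omega)
            (by have := v.2.2.1; have := v.2.1; omega) hz))
      · rcases hrel with h | h
        · exact Or.inl (Or.inl (by show cstr u.1.2 = cstr v.1.1; rw [h]))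
        · exact Or.inr (Or.inl (by show cstr v.1.2 = cstr u.1.1; rw [h]))
  · intro k
    refine ⟨2 ^ k + 1, fun n hn => ?_⟩
    have h1 : k < Nat.clog 2 n := (Nat.lt_clog_iff_pow_lt (by norm_num)).mpr (by omega)
    calc (k : ℕ∞) < (Nat.clog 2 n : ℕ∞) := by exact_mod_cast h1
      _ ≤ (GraphV n).chromaticNumber := Stmt19Aux.chrom_bound n
end
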